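/- arXiv:1910.13071 — 5 statements merged into one kernel-verified Lean document; each statement's English description precedes it below -/
import Mathlib

section
/- For all integers 1 ≤ m ≤ d, k ≥ 2, and N ≥ 1, the largest cardinality of a subset of {1,...,N}^d containing no arithmetic patch of size k with orientation {e_1,...,e_m} equals N^(d-m) times the largest cardinality of a subset of {1,...,N}^m containing no arithmetic patch of size k with orientation {e_1,...,e_m}. -/
open scoped Classical
open Filter

noncomputable section

/-- The grid `{1,...,N}^d`. -/
def apGrid (d N : ℕ) : Finset (Fin d → ℕ) := Fintype.piFinset fun _ => Finset.Icc 1 N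

/-- `A ⊆ ℕ^d` contains an arithmetic patch of size `k` with orientation `{e_1,...,e_m}`:
there are `t` and a scale `Δ > 0` such that all points `t + Δ·Σ x_i e_i`, `x_i ∈ {0,...,k-1}`,
lie in `A`. -/
def HasPatchNat (d m k : ℕ) (A : Set (Fin d → ℕ)) : Prop :=
  ∃ t : Fin d → ℕ, ∃ Δ : ℕ, 0 < Δ ∧
    ∀ x : Fin m → Fin k,
      (fun i : Fin d => t i + Δ * (if h : (i : ℕ) < m then (x ⟨i, h⟩ : ℕ) else 0)) ∈ A

/-- `rPatch k d m N` = largest cardinality of a subset of `{1,...,N}^d` containing no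
arithmetic patch of size `k` with orientation `{e_1,...,e_m}`. -/
def rPatch (k d m N : ℕ) : ℕ :=
  ((apGrid d N).powerset.filter
    (fun A : Finset (Fin d → ℕ) => ¬ HasPatchNat d m k (↑A : Set (Fin d → ℕ)))).sup Finset.card

/-- combine a head `p : Fin m → ℕ` and tail `q` into a vector in `Fin d → ℕ`. -/
def apPhi (d m : ℕ) (p : Fin m → ℕ) (q : Fin (d - m) → ℕ) : Fin d → ℕ :=
  fun i => if h : (i : ℕ) < m then p ⟨i, h⟩ else q ⟨(i : ℕ) - m, by have := i.2; omega⟩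

def apPr (d m : ℕ) (hmd : m ≤ d) (v : Fin d → ℕ) : Fin m → ℕ :=
  fun j => v ⟨j, by have := j.2; omega⟩

def apTl (d m : ℕ) (v : Fin d → ℕ) : Fin (d - m) → ℕ :=
  fun j => v ⟨m + j, by have := j.2; omega⟩

variable {d m N k : ℕ}

lemma apPr_phi (hmd : m ≤ d) (p : Fin m → ℕ) (q : Fin (d - m) → ℕ) :
    apPr d m hmd (apPhi d m p q) = p := by
  funext j
  simp [apPr, apPhi, j.2]

lemma apTl_phi (p : Fin m → ℕ) (q : Fin (d - m) → ℕ) :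
    apTl d m (apPhi d m p q) = q := by
  funext j
  have h : ¬ (m + (j : ℕ) < m) := by omega
  simp only [apTl, apPhi, h, dif_neg, not_false_iff]
  congr 1
  exact Fin.ext (by simp)

lemma apPhi_pr_tl (hmd : m ≤ d) (v : Fin d → ℕ) :
    apPhi d m (apPr d m hmd v) (apTl d m v) = v := by
  funext i
  by_cases h : (i : ℕ) < m
  · simp [apPhi, apPr, h]
  · simp only [apPhi, apTl, h, dif_neg, not_false_iff]
    congr 1
    exact Fin.ext (by simp; omega)

lemma apPhi_mem (hmd : m ≤ d) {p : Fin m → ℕ} {q : Fin (d - m) → ℕ}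
    (hp : p ∈ apGrid m N) (hq : q ∈ apGrid (d - m) N) : apPhi d m p q ∈ apGrid d N := by
  simp only [apGrid, Fintype.mem_piFinset] at *
  intro i
  by_cases h : (i : ℕ) < m
  · simpa [apPhi, h] using hp ⟨i, h⟩
  · simpa [apPhi, h] using hq ⟨(i : ℕ) - m, by have := i.2; omega⟩

lemma apPr_mem (hmd : m ≤ d) {v : Fin d → ℕ} (hv : v ∈ apGrid d N) :
    apPr d m hmd v ∈ apGrid m N := by
  simp only [apGrid, Fintype.mem_piFinset] at *
  intro j; exact hv _

lemma apTl_mem {v : Fin d → ℕ} (hv : v ∈ apGrid d N) :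
    apTl d m v ∈ apGrid (d - m) N := by
  simp only [apGrid, Fintype.mem_piFinset] at *
  intro j; exact hv _

lemma card_apGrid (r N : ℕ) : (apGrid r N).card = N ^ r := by
  simp [apGrid, Fintype.card_piFinset, Nat.card_Icc]

/-- the key computation relating patch points in dimension `d` to those in dimension `m`. -/
lemma patch_point_eq (t' : Fin m → ℕ) (y : Fin (d - m) → ℕ) (Δ : ℕ) (x : Fin m → Fin k) :
    (fun i : Fin d => apPhi d m t' y i + Δ * (if h : (i : ℕ) < m then (x ⟨i, h⟩ : ℕ) else 0))
      = apPhi d m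
          (fun j : Fin m => t' j + Δ * (if h : (j : ℕ) < m then (x ⟨j, h⟩ : ℕ) else 0)) y := by
  funext i
  by_cases h : (i : ℕ) < m
  · simp [apPhi, h]
  · simp [apPhi, h]

theorem rPatch_eq (k d m N : ℕ) (hm : 1 ≤ m) (hmd : m ≤ d) (hk : 2 ≤ k) (hN : 1 ≤ N) :
    rPatch k d m N = N ^ (d - m) * rPatch k m m N := by
  apply le_antisymm
  · -- upper bound
    apply Finset.sup_le
    intro A hA
    simp only [Finset.mem_filter, Finset.mem_powerset] at hA
    obtain ⟨hAsub, hAnop⟩ := hA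
    have hmap : ∀ a ∈ A, apTl d m a ∈ apGrid (d - m) N := fun a ha => apTl_mem (hAsub ha)
    rw [Finset.card_eq_sum_card_fiberwise hmap]
    have hbound : ∀ y ∈ apGrid (d - m) N,
        (A.filter (fun a => apTl d m a = y)).card ≤ rPatch k m m N := by
      intro y hy
      set F := A.filter (fun a => apTl d m a = y) with hF
      set B := F.image (apPr d m hmd) with hB
      have hFcard : F.card = B.card := by
        rw [hB]
        refine (Finset.card_image_of_injOn ?_).symm
        intro a ha a' ha' hpr
        simp only [hF, Finset.mem_coe, Finset.mem_filter] at ha ha'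
        calc a = apPhi d m (apPr d m hmd a) (apTl d m a) := (apPhi_pr_tl hmd a).symm
          _ = apPhi d m (apPr d m hmd a') (apTl d m a') := by rw [hpr, ha.2, ha'.2]
          _ = a' := apPhi_pr_tl hmd a'
      rw [hFcard]
      apply Finset.le_sup
      simp only [Finset.mem_filter, Finset.mem_powerset]
      constructor
      · intro b hb
        simp only [hB, Finset.mem_image] at hb
        obtain ⟨a, ha, rfl⟩ := hb
        simp only [hF, Finset.mem_filter] at ha
        exact apPr_mem hmd (hAsub ha.1)
      · rintro ⟨t', Δ, hΔ, hx⟩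
        apply hAnop
        refine ⟨apPhi d m t' y, Δ, hΔ, fun x => ?_⟩
        have hmem := hx x
        rw [Finset.mem_coe, hB, Finset.mem_image] at hmem
        obtain ⟨a, ha, hpr⟩ := hmem
        simp only [hF, Finset.mem_filter] at ha
        have : (fun i : Fin d =>
            apPhi d m t' y i + Δ * (if h : (i : ℕ) < m then (x ⟨i, h⟩ : ℕ) else 0)) = a := by
          rw [patch_point_eq, ← hpr, ← ha.2, apPhi_pr_tl hmd a]
        rw [Finset.mem_coe]
        rw [this]  -- membership
        exact ha.1
    calc ∑ y ∈ apGrid (d - m) N, (A.filter (fun a => apTl d m a = y)).card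
        ≤ (apGrid (d - m) N).card • rPatch k m m N := Finset.sum_le_card_nsmul _ _ _ hbound
      _ = N ^ (d - m) * rPatch k m m N := by rw [smul_eq_mul, card_apGrid]
  · -- lower bound
    have hne : ((apGrid m N).powerset.filter
        (fun A : Finset (Fin m → ℕ) => ¬ HasPatchNat m m k (↑A : Set (Fin m → ℕ)))).Nonempty := by
      refine ⟨∅, ?_⟩
      simp only [Finset.mem_filter, Finset.mem_powerset]
      refine ⟨Finset.empty_subset _, ?_⟩
      rintro ⟨t, Δ, hΔ, hx⟩
      have := hx (fun _ => ⟨0, by omega⟩)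
      simpa using this
    obtain ⟨B, hBmem, hBcard⟩ := Finset.exists_mem_eq_sup _ hne Finset.card
    simp only [Finset.mem_filter, Finset.mem_powerset] at hBmem
    obtain ⟨hBsub, hBnop⟩ := hBmem
    have hrB : rPatch k m m N = B.card := hBcard
    rw [hrB]
    set φ : (Fin m → ℕ) × (Fin (d - m) → ℕ) → (Fin d → ℕ) :=
      fun pq => apPhi d m pq.1 pq.2 with hφ
    have hφinj : Function.Injective φ := by
      intro pq pq' h
      have h1 : pq.1 = pq'.1 := by
        rw [← apPr_phi hmd pq.1 pq.2, ← apPr_phi hmd pq'.1 pq'.2]; exact congrArg _ h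
      have h2 : pq.2 = pq'.2 := by
        rw [← apTl_phi pq.1 pq.2, ← apTl_phi pq'.1 pq'.2]; exact congrArg _ h
      exact Prod.ext h1 h2
    set A := (B ×ˢ apGrid (d - m) N).image φ with hA
    have hAcard : A.card = N ^ (d - m) * B.card := by
      rw [hA, Finset.card_image_of_injective _ hφinj, Finset.card_product, card_apGrid,
        Nat.mul_comm]
    rw [← hAcard]
    apply Finset.le_sup
    simp only [Finset.mem_filter, Finset.mem_powerset]
    constructor
    · intro v hv
      simp only [hA, Finset.mem_image, Finset.mem_product] at hv
      obtain ⟨⟨p, q⟩, ⟨hp, hq⟩, rfl⟩ := hv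
      exact apPhi_mem hmd (hBsub hp) hq
    · rintro ⟨t, Δ, hΔ, hx⟩
      apply hBnop
      refine ⟨apPr d m hmd t, Δ, hΔ, fun x => ?_⟩
      have hmem := hx x
      rw [Finset.mem_coe] at hmem
      have ht : t = apPhi d m (apPr d m hmd t) (apTl d m t) := (apPhi_pr_tl hmd t).symm
      rw [ht] at hmem
      rw [show (fun i : Fin d =>
          apPhi d m (apPr d m hmd t) (apTl d m t) i
            + Δ * (if h : (i : ℕ) < m then (x ⟨i, h⟩ : ℕ) else 0))
          = apPhi d m (fun j : Fin m => apPr d m hmd t j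
              + Δ * (if h : (j : ℕ) < m then (x ⟨j, h⟩ : ℕ) else 0)) (apTl d m t)
        from patch_point_eq _ _ _ _] at hmem
      simp only [hA, Finset.mem_image, Finset.mem_product] at hmem
      obtain ⟨⟨p, q⟩, ⟨hp, hq⟩, heq⟩ := hmem
      have : p = fun j : Fin m => apPr d m hmd t j
          + Δ * (if h : (j : ℕ) < m then (x ⟨j, h⟩ : ℕ) else 0) := by
        have := congrArg (apPr d m hmd) heq
        rwa [hφ, apPr_phi hmd, apPr_phi hmd] at this
      rw [Finset.mem_coe]
      rw [← this]
      exact hp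
end
end

section
/- Fix integers k ≥ 2, d ≥ 1, 1 ≤ m ≤ d (with k ≥ 3 when d = 1), a real number 0 < ε < 1/8, set N = ⌈1/(8ε)⌉, fix 0 < δ ≤ 1/24, and let A ⊆ {0,...,N-1}^d contain no arithmetic patch of size k with orientation {e_1,...,e_m}. Let F be the attractor of the IFS {φ_a(x) = (δ/(N-1+δ))x + a : a ∈ A}. Then F does not contain any (k, ε, {e_1,...,e_m})-AP. -/
open scoped Classical
open Filter

noncomputable section

/-- The `i`-th standard basis vector of `ℝ^d` (as `EuclideanSpace`), indexed by `i : ℕ`. -/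
def stdVec (d : ℕ) (i : ℕ) : EuclideanSpace ℝ (Fin d) :=
  (EuclideanSpace.equiv (Fin d) ℝ).symm fun j : Fin d => if (j : ℕ) = i then (1 : ℝ) else 0

/-- `Q ⊆ ℝ^d` contains a `(k, ε, v)`-AP: there is an arithmetic patch
`P = {t + Δ·Σ x_i v_i : x_i ∈ {0,...,k-1}}` of scale `Δ > 0` such that every point of `P`
is within distance `ε·Δ` of `Q` (i.e. `inf_{y ∈ Q} ‖x - y‖ ≤ ε Δ` for all `x ∈ P`). -/
def ContainsAP (d m k : ℕ) (ε : ℝ) (v : Fin m → EuclideanSpace ℝ (Fin d))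
    (Q : Set (EuclideanSpace ℝ (Fin d))) : Prop :=
  ∃ t : EuclideanSpace ℝ (Fin d), ∃ Δ : ℝ, 0 < Δ ∧
    ∀ x : Fin m → Fin k,
      Metric.infDist (t + Δ • ∑ i, ((x i : ℕ) : ℝ) • v i) Q ≤ ε * Δ

/-- Smallest cardinality of a family of sets of diameter at most `r` covering `E`. -/
def coverNum {X : Type*} [MetricSpace X] (E : Set X) (r : ℝ) : ℕ :=
  sInf {n : ℕ | ∃ U : Finset (Set X), U.card = n ∧
    (∀ s ∈ U, Metric.diam s ≤ r) ∧ E ⊆ ⋃₀ (↑U : Set (Set X))}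

/-- The Assouad dimension of a set in a metric space. -/
def assouadDim {X : Type*} [MetricSpace X] (F : Set X) : ℝ :=
  sInf {σ : ℝ | 0 ≤ σ ∧ ∃ C : ℝ, 0 < C ∧
    ∀ x ∈ F, ∀ r : ℝ, 0 < r → ∀ R : ℝ, r < R →
      (coverNum (Metric.closedBall x R ∩ F) r : ℝ) ≤ C * (R / r) ^ σ}

set_option maxHeartbeats 4000000 in
theorem attractor_no_approx_AP (k d m : ℕ) (hk : 2 ≤ k) (hd : 1 ≤ d) (hm : 1 ≤ m)
    (hmd : m ≤ d) (hk3 : d = 1 → 3 ≤ k)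
    (ε : ℝ) (hε : 0 < ε) (hε' : ε < 1/8) (N : ℕ) (hN : N = ⌈1/(8*ε)⌉₊)
    (δ : ℝ) (hδ : 0 < δ) (hδ' : δ ≤ 1/24)
    (A : Finset (Fin d → ℕ)) (hA : A ⊆ Fintype.piFinset fun _ : Fin d => Finset.range N)
    (hfree : ¬ HasPatchNat d m k (↑A : Set (Fin d → ℕ)))
    (φ : (Fin d → ℕ) → EuclideanSpace ℝ (Fin d) → EuclideanSpace ℝ (Fin d))
    (hφ : ∀ a x, φ a x = (δ / ((N : ℝ) - 1 + δ)) • x +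
      (EuclideanSpace.equiv (Fin d) ℝ).symm (fun i : Fin d => (a i : ℝ)))
    (F : Set (EuclideanSpace ℝ (Fin d)))
    (hFc : IsCompact F) (hFne : F.Nonempty) (hFinv : F = ⋃ a ∈ A, φ a '' F) :
    ¬ ContainsAP d m k ε (fun i : Fin m => stdVec d i) F := by
  intro hAP
  obtain ⟨t, Δ, hΔ, hap⟩ := hAP
  -- ## basic constants
  have hN1 : 1 < N := by
    rw [hN, Nat.lt_ceil]; push_cast
    rw [lt_div_iff₀ (by linarith)]; linarith
  have hN2 : (2:ℝ) ≤ (N:ℝ) := by exact_mod_cast hN1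
  have hεB : ((N:ℝ)-1) * ε < 1/8 := by
    have h : (N:ℝ) < 1/(8*ε) + 1 := by
      rw [hN]; exact_mod_cast Nat.ceil_lt_add_one (by positivity)
    have h2 : ((N:ℝ)-1) < 1/(8*ε) := by linarith
    calc ((N:ℝ)-1)*ε < (1/(8*ε))*ε := by apply mul_lt_mul_of_pos_right h2 hε
    _ = 1/8 := by field_simp
  set ρ : ℝ := (N:ℝ) - 1 + δ with hρdef
  have hρ1 : 1 < ρ := by rw [hρdef]; linarith
  have hρ0 : 0 < ρ := by linarith
  have hρN : ρ ≤ (N:ℝ) := by rw [hρdef]; linarith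
  set c : ℝ := δ / ρ with hcdef
  have hc0 : 0 < c := div_pos hδ hρ0
  have hc1 : c < 1 := by rw [hcdef, div_lt_one hρ0]; rw [hρdef]; linarith
  have hcρ : c * ρ = δ := div_mul_cancel₀ _ (ne_of_gt hρ0)
  have h1c : 1 - c = ((N:ℝ)-1)/ρ := by
    rw [hcdef, eq_div_iff hρ0.ne', sub_mul, div_mul_cancel₀ _ hρ0.ne', hρdef]; ring
  have h1c0 : 0 < 1 - c := by linarith
  -- coordinates are bounded by the norm
  have hcoord : ∀ w : EuclideanSpace ℝ (Fin d), ∀ i : Fin d, |w i| ≤ ‖w‖ := by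
    intro w i
    have h := Finset.single_le_sum (f := fun j => ‖w j‖^2) (fun j _ => by positivity)
      (Finset.mem_univ i)
    rw [EuclideanSpace.norm_eq, ← Real.sqrt_sq_eq_abs]
    apply Real.sqrt_le_sqrt
    calc (w i)^2 = ‖w i‖^2 := by rw [Real.norm_eq_abs, sq_abs]
    _ ≤ _ := h
  -- F is bounded
  obtain ⟨M, hMb⟩ : ∃ M : ℝ, ∀ z ∈ F, ∀ i, |z i| ≤ M := by
    obtain ⟨M, hM⟩ := hFc.isBounded.exists_norm_le
    exact ⟨M, fun z hz i => le_trans (hcoord z i) (hM z hz)⟩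
  have hM0 : 0 ≤ M := by
    obtain ⟨z, hz⟩ := hFne
    exact le_trans (abs_nonneg _) (hMb z hz ⟨0, by omega⟩)
  -- φ in coordinates
  have hφc : ∀ a (x : EuclideanSpace ℝ (Fin d)) (i : Fin d),
      φ a x i = c * x i + ((a i : ℕ):ℝ) := by
    intro a x i; rw [hφ]; rfl
  -- geometric sum bound
  have hgeo : ∀ q : ℕ, (∑ j ∈ Finset.range q, c^j) ≤ 1/(1-c) := by
    intro q
    rw [le_div_iff₀ (by linarith)]
    have h := geom_sum_mul c q
    have h2 : (∑ j ∈ Finset.range q, c^j) * (1-c) = 1 - c^q := by linear_combination -h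
    have h3 : (0:ℝ) ≤ c^q := by positivity
    linarith
  -- ## digit expansion
  have digit : ∀ n : ℕ, ∀ y ∈ F, ∃ a : ℕ → Fin d → ℕ, ∃ z ∈ F, (∀ j < n, a j ∈ A) ∧
      ∀ i, y i = (∑ j ∈ Finset.range n, c^j * ((a j i : ℕ):ℝ)) + c^n * z i := by
    intro n
    induction n with
    | zero => intro y hy; exact ⟨fun _ _ => 0, y, hy, by omega, by intro i; simp⟩
    | succ n ih =>
      intro y hy
      rw [hFinv] at hy
      simp only [Set.mem_iUnion, Set.mem_image] at hy
      obtain ⟨a0, ha0, w, hw, hwy⟩ := hy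
      obtain ⟨b, z, hz, hbA, hval⟩ := ih w hw
      refine ⟨fun j => if j = 0 then a0 else b (j-1), z, hz, ?_, ?_⟩
      · intro j hj
        by_cases hj0 : j = 0
        · simpa [hj0] using ha0
        · simpa [hj0] using hbA (j-1) (by omega)
      · intro i
        have h1 : y i = c * w i + ((a0 i : ℕ):ℝ) := by rw [← hwy]; exact hφc a0 w i
        rw [h1, hval i, Finset.sum_range_succ']
        simp only [if_pos rfl]
        have : ∀ j ∈ Finset.range n, c^(j+1) * ((if j+1 = 0 then a0 else b (j+1-1)) i : ℝ)
            = c * (c^j * (b j i : ℝ)) := by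
          intro j _; simp [pow_succ]; ring
        rw [Finset.sum_congr rfl this]
        rw [← Finset.mul_sum]
        simp [pow_succ]
        ring
  -- ## range of F: coordinates in [0, ρ]
  have hrange : ∀ y ∈ F, ∀ i, 0 ≤ y i ∧ y i ≤ ρ := by
    intro y hy i
    have key : ∀ η : ℝ, 0 < η → -η ≤ y i ∧ y i ≤ ρ + η := by
      intro η hη
      obtain ⟨n, hn⟩ := exists_pow_lt_of_lt_one (div_pos hη (by linarith : (0:ℝ) < M+1)) hc1
      obtain ⟨a, z, hz, haA, hval⟩ := digit n y hy
      have hcnM : c^n * |z i| < η := by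
        have h1 : c^n * |z i| ≤ c^n * (M+1) := by
          apply mul_le_mul_of_nonneg_left _ (pow_pos hc0 n).le
          have := hMb z hz i; linarith
        have h2 : c^n * (M+1) < η := by
          rw [← lt_div_iff₀ (by linarith : (0:ℝ) < M+1)]; exact hn
        linarith
      have hS0 : 0 ≤ ∑ j ∈ Finset.range n, c^j * ((a j i : ℕ):ℝ) := by
        apply Finset.sum_nonneg; intro j _; exact mul_nonneg (pow_pos hc0 j).le (Nat.cast_nonneg _)
      have hS1 : (∑ j ∈ Finset.range n, c^j * ((a j i : ℕ):ℝ)) ≤ ρ := by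
        have h1 : ∀ j ∈ Finset.range n, c^j * ((a j i : ℕ):ℝ) ≤ c^j * ((N:ℝ)-1) := by
          intro j hj
          apply mul_le_mul_of_nonneg_left _ (pow_pos hc0 j).le
          have := hA (haA j (Finset.mem_range.mp hj))
          have h2 := (Fintype.mem_piFinset.mp this) i
          have h3 := Finset.mem_range.mp h2
          have : ((a j i : ℕ):ℝ) + 1 ≤ (N:ℝ) := by exact_mod_cast h3
          linarith
        calc (∑ j ∈ Finset.range n, c^j * ((a j i : ℕ):ℝ))
            ≤ ∑ j ∈ Finset.range n, c^j * ((N:ℝ)-1) := Finset.sum_le_sum h1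
        _ = (∑ j ∈ Finset.range n, c^j) * ((N:ℝ)-1) := by rw [Finset.sum_mul]
        _ ≤ (1/(1-c)) * ((N:ℝ)-1) := by
            apply mul_le_mul_of_nonneg_right (hgeo n) (by linarith)
        _ = ρ := by
              rw [h1c]
              have hN10 : (N:ℝ)-1 ≠ 0 := by linarith
              field_simp
      have habs : |c^n * z i| < η := by
        rw [abs_mul, abs_of_nonneg (pow_pos hc0 n).le]; exact hcnM
      have h5 := hval i
      constructor
      · nlinarith [abs_le.mp (le_of_lt habs)]
      · nlinarith [abs_le.mp (le_of_lt habs)]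
    constructor
    · by_contra h; push_neg at h
      have := (key (-(y i)/2) (by linarith)).1; linarith
    · by_contra h; push_neg at h
      have := (key ((y i - ρ)/2) (by linarith)).2; linarith
  -- ## choose the scale n, set θ and E
  obtain ⟨n, hn⟩ := exists_pow_lt_of_lt_one
    (div_pos hΔ (mul_pos (by nlinarith : (0:ℝ) < 48*(N:ℝ)) hρ0)) hc1
  set θ : ℝ := c^n * ρ with hθdef
  have hθ0 : 0 < θ := mul_pos (pow_pos hc0 n) hρ0
  have hθ : θ * (48*(N:ℝ)) ≤ Δ := by
    have h1 : c^n * (48*(N:ℝ)*ρ) ≤ Δ := by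
      rw [← le_div_iff₀ (mul_pos (by nlinarith : (0:ℝ) < 48*(N:ℝ)) hρ0)]; exact le_of_lt hn
    calc θ * (48*(N:ℝ)) = c^n * (48*(N:ℝ)*ρ) := by rw [hθdef]; ring
    _ ≤ Δ := h1
  set E : ℝ := 2*ε*Δ + θ with hEdef
  have hE0 : 0 < E := by have := mul_pos (mul_pos (by norm_num : (0:ℝ)<2) hε) hΔ; rw [hEdef]; nlinarith
  have hθΔ : θ * 96 ≤ Δ := by nlinarith [hθ0]
  have hEa : 96 * E ≤ 25 * Δ := by
    have h1 : 2*ε*Δ ≤ Δ/4 := by nlinarith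
    nlinarith
  have hEρ : 32 * (E*ρ) ≤ 9 * Δ := by
    have hερ : ε * ρ ≤ 1/8 + 1/192 := by
      have h1 : ε * δ ≤ (1/8)*(1/24) := by nlinarith
      rw [hρdef]; nlinarith
    have h2 : θ * ρ ≤ Δ/48 := by nlinarith [hθ0, hρ0]
    have h3 : E * ρ = 2*(ε*ρ)*Δ + θ*ρ := by rw [hEdef]; ring
    nlinarith
  have hEΔ : E < Δ := by linarith
  have hδΔ : δ * Δ ≤ Δ/24 := by nlinarith
  have hδE : 0 ≤ δ * E := le_of_lt (mul_pos hδ hE0)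
  have hcond2 : δ*(Δ+E) < (1-δ)*(Δ-E) := by nlinarith
  have hcond3 : 2*(E*ρ) < (1-2*δ)*(Δ-E) := by nlinarith
  have hcond4 : E*ρ < (1-δ)*(Δ-E) := by nlinarith
  set L : ℝ := (Δ-E)/ρ with hLdef
  set U : ℝ := (Δ+E)/(1-δ) with hUdef
  have hδ1 : 0 < 1 - δ := by linarith
  have hL0 : 0 < L := div_pos (by linarith) hρ0
  have hcUL : c * U < L := by
    rw [hLdef, hUdef, hcdef, div_mul_div_comm, div_lt_div_iff₀ (mul_pos hρ0 hδ1) hρ0]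
    nlinarith [hcond2, hρ0]
  -- level uniqueness
  have hlevel : ∀ j j' : ℕ, L ≤ c^j → c^j ≤ U → L ≤ c^j' → c^j' ≤ U → j = j' := by
    have key : ∀ j j' : ℕ, j < j' → c^j ≤ U → L ≤ c^j' → False := by
      intro j j' hjj hU' hL'
      have h1 : c^j' ≤ c^(j+1) := pow_le_pow_of_le_one hc0.le hc1.le (by omega)
      have h2 : c^(j+1) = c * c^j := by ring
      have h3 : c * c^j ≤ c * U := mul_le_mul_of_nonneg_left hU' hc0.le
      linarith
    intro j j' h1 h2 h3 h4
    rcases Nat.lt_trichotomy j j' with h | h | h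
    · exact absurd (key j j' h h2 h3) (by simp)
    · exact h
    · exact absurd (key j' j h h4 h1) (by simp)
  -- ## approximation points and their digits
  set pt : (Fin m → Fin k) → EuclideanSpace ℝ (Fin d) :=
    fun x => t + Δ • ∑ i', ((x i' : ℕ):ℝ) • stdVec d i' with hptdef
  have happrox : ∀ x : Fin m → Fin k, ∃ y ∈ F, ∀ i, |pt x i - y i| ≤ ε*Δ := by
    intro x
    obtain ⟨y, hyF, hyd⟩ := hFc.exists_infDist_eq_dist hFne (pt x)
    refine ⟨y, hyF, fun i => ?_⟩
    have h1 : dist (pt x) y ≤ ε*Δ := by rw [← hyd]; exact hap x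
    have h2 : |(pt x - y) i| ≤ ‖pt x - y‖ := hcoord _ i
    have h3 : (pt x - y) i = pt x i - y i := rfl
    rw [h3] at h2
    rw [dist_eq_norm] at h1
    linarith
  choose y hyF hyapp using happrox
  choose a z hzF haA hval using fun x => digit n (y x) (hyF x)
  set S : (Fin m → Fin k) → Fin d → ℝ :=
    fun x i => ∑ j ∈ Finset.range n, c^j * ((a x j i : ℕ):ℝ) with hSdef
  -- coordinates of pt
  have hpt : ∀ (x : Fin m → Fin k) (i : Fin d),
      pt x i = t i + Δ * (if h : (i:ℕ) < m then ((x ⟨(i:ℕ), h⟩ : ℕ):ℝ) else 0) := by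
    intro x i
    have h0 : pt x i = t i + Δ * ((∑ i', ((x i' : ℕ):ℝ) • stdVec d (i':ℕ)) i) := rfl
    have h1 : ((∑ i' : Fin m, ((x i' : ℕ):ℝ) • stdVec d (i':ℕ)) i)
        = ∑ i' : Fin m, ((x i' : ℕ):ℝ) * (if (i:ℕ) = ((i':Fin m):ℕ) then (1:ℝ) else 0) := by
      rw [WithLp.ofLp_sum, Finset.sum_apply]
      rfl
    rw [h0, h1]
    by_cases h : (i:ℕ) < m
    · rw [dif_pos h]
      rw [Finset.sum_eq_single (⟨(i:ℕ), h⟩ : Fin m)]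
      · simp
      · intro b _ hb
        rw [if_neg, mul_zero]
        intro hib
        exact hb (Fin.ext hib.symm)
      · intro habs; exact absurd (Finset.mem_univ _) habs
    · rw [dif_neg h]
      rw [Finset.sum_eq_zero, mul_zero]
      intro i' _
      rw [if_neg, mul_zero]
      intro hie
      exact h (hie ▸ i'.isLt)
  -- digit bounds
  have hdb : ∀ (x : Fin m → Fin k) (j : ℕ), j < n → ∀ i, ((a x j i : ℕ):ℝ) ≤ (N:ℝ)-1 := by
    intro x j hj i
    have := hA (haA x j hj)
    have h2 := (Fintype.mem_piFinset.mp this) i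
    have h3 := Finset.mem_range.mp h2
    have : ((a x j i : ℕ):ℝ) + 1 ≤ (N:ℝ) := by exact_mod_cast h3
    linarith
  -- S difference control
  have hSdiff : ∀ (x x' : Fin m → Fin k) (i : Fin d) (D : ℝ),
      pt x' i - pt x i = D → |S x' i - S x i - D| ≤ E := by
    intro x x' i D hD
    have h1 : S x i = y x i - c^n * z x i := by rw [hSdef]; have := hval x i; linarith
    have h2 : S x' i = y x' i - c^n * z x' i := by rw [hSdef]; have := hval x' i; linarith
    have h3 := hyapp x i
    have h4 := hyapp x' i
    have h5 := hrange (z x) (hzF x) i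
    have h6 := hrange (z x') (hzF x') i
    have h7 : |c^n * z x' i - c^n * z x i| ≤ θ := by
      rw [hθdef, abs_le]
      constructor
      · nlinarith [pow_pos hc0 n]
      · nlinarith [pow_pos hc0 n]
    rw [abs_le] at h3 h4 h7 ⊢
    constructor <;> [skip; skip] <;>
      (rw [h1, h2]; rw [← hD]; rw [hEdef]; cases h3; cases h4; cases h7; linarith)
  -- tail bound: if digits agree below j0, the value difference is c^j0 * (digit gap) up to δc^j0
  have tailbound : ∀ (x x' : Fin m → Fin k) (i : Fin d) (j0 : ℕ), j0 < n →
      (∀ j, j < j0 → a x' j i = a x j i) →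
      |S x' i - S x i - c^j0 * (((a x' j0 i : ℕ):ℝ) - ((a x j0 i : ℕ):ℝ))| ≤ δ * c^j0 := by
    intro x x' i j0 hj0n heq
    set f : ℕ → ℝ := fun j => c^j * ((a x' j i : ℕ):ℝ) - c^j * ((a x j i : ℕ):ℝ) with hf
    have hsub : S x' i - S x i = ∑ j ∈ Finset.range n, f j := by
      rw [hSdef, ← Finset.sum_sub_distrib]
    have hzero : ∀ j ∈ Finset.range j0, f j = 0 := by
      intro j hj
      simp only [hf]
      rw [heq j (Finset.mem_range.mp hj)]; ring
    have hsplit : ∑ j ∈ Finset.range n, f j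
        = f j0 + ∑ j ∈ Finset.Ico (j0+1) n, f j := by
      rw [Finset.range_eq_Ico,
        ← Finset.sum_Ico_consecutive _ (Nat.zero_le (j0+1)) (by omega : j0+1 ≤ n)]
      congr 1
      rw [← Finset.range_eq_Ico, Finset.sum_range_succ, Finset.sum_eq_zero hzero, zero_add]
    have hterm : f j0 = c^j0 * (((a x' j0 i : ℕ):ℝ) - ((a x j0 i : ℕ):ℝ)) := by
      simp only [hf]; ring
    rw [hsub, hsplit, hterm]
    have hring : c^j0 * (((a x' j0 i : ℕ):ℝ) - ((a x j0 i : ℕ):ℝ))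
        + (∑ j ∈ Finset.Ico (j0+1) n, f j)
        - c^j0 * (((a x' j0 i : ℕ):ℝ) - ((a x j0 i : ℕ):ℝ))
        = ∑ j ∈ Finset.Ico (j0+1) n, f j := by ring
    rw [hring]
    have hTb : |∑ j ∈ Finset.Ico (j0+1) n, f j| ≤ ∑ j ∈ Finset.Ico (j0+1) n, c^j * ((N:ℝ)-1) := by
      refine (Finset.abs_sum_le_sum_abs _ _).trans (Finset.sum_le_sum ?_)
      intro j hj
      obtain ⟨hj1, hj2⟩ := Finset.mem_Ico.mp hj
      have hb1 := hdb x j hj2 i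
      have hb2 := hdb x' j hj2 i
      have hc3 : (0:ℝ) ≤ ((a x j i : ℕ):ℝ) := Nat.cast_nonneg _
      have hc4 : (0:ℝ) ≤ ((a x' j i : ℕ):ℝ) := Nat.cast_nonneg _
      have hfj : f j = c^j * (((a x' j i : ℕ):ℝ) - ((a x j i : ℕ):ℝ)) := by
        simp only [hf]; ring
      rw [hfj, abs_mul, abs_of_nonneg (pow_pos hc0 j).le]
      apply mul_le_mul_of_nonneg_left _ (pow_pos hc0 j).le
      rw [abs_le]; constructor <;> linarith
    have hgeo2 : ∑ j ∈ Finset.Ico (j0+1) n, c^j * ((N:ℝ)-1) ≤ δ * c^j0 := by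
      rw [← Finset.sum_mul]
      have hs : (∑ j ∈ Finset.Ico (j0+1) n, c^j) ≤ c^(j0+1) * (1/(1-c)) := by
        rw [Finset.sum_Ico_eq_sum_range]
        have hcg : ∀ j ∈ Finset.range (n-(j0+1)), c^(j0+1+j) = c^(j0+1) * c^j :=
          fun j _ => pow_add c _ _
        rw [Finset.sum_congr rfl hcg, ← Finset.mul_sum]
        exact mul_le_mul_of_nonneg_left (hgeo _) (pow_pos hc0 _).le
      have hNN : (0:ℝ) ≤ (N:ℝ)-1 := by linarith
      have hN10 : ((N:ℝ)-1) ≠ 0 := by linarith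
      calc (∑ j ∈ Finset.Ico (j0+1) n, c^j) * ((N:ℝ)-1)
          ≤ (c^(j0+1) * (1/(1-c))) * ((N:ℝ)-1) := mul_le_mul_of_nonneg_right hs hNN
      _ = δ * c^j0 := by
          rw [h1c]
          have haux : (1/(((N:ℝ)-1)/ρ)) * ((N:ℝ)-1) = ρ := by
            rw [one_div, inv_div]; exact div_mul_cancel₀ ρ hN10
          rw [mul_assoc, haux, pow_succ, mul_assoc, hcρ]; ring
    exact le_trans hTb hgeo2
  -- 1 ≤ |v - u| for distinct naturals
  have natgap : ∀ u v : ℕ, u ≠ v → (1:ℝ) ≤ |(v:ℝ) - (u:ℝ)| := by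
    intro u v h
    rcases Nat.lt_or_ge u v with h1 | h1
    · have h2 : (u:ℝ) + 1 ≤ v := by exact_mod_cast h1
      rw [abs_of_nonneg (by linarith)]; linarith
    · have h1' : v < u := by omega
      have h2 : (v:ℝ) + 1 ≤ u := by exact_mod_cast h1'
      rw [abs_of_nonpos (by linarith)]; linarith
  -- ## the key pairwise analysis
  have pair : ∀ (x x' : Fin m → Fin k) (i0 : Fin m),
      ((x' i0 : ℕ) = (x i0 : ℕ) + 1) → (∀ i' : Fin m, i' ≠ i0 → x' i' = x i') →
      ∃ j0 : ℕ, j0 < n ∧ L ≤ c^j0 ∧ c^j0 ≤ U ∧ ∃ G : ℕ, 1 ≤ G ∧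
        |c^j0 * (G:ℝ) - Δ| ≤ E + δ * c^j0 ∧
        a x' j0 (Fin.castLE hmd i0) = a x j0 (Fin.castLE hmd i0) + G ∧
        (∀ i : Fin d, (i:ℕ) ≠ (i0:ℕ) → ∀ j, j < n → L ≤ c^j → a x' j i = a x j i) := by
    intro x x' i0 hsucc hsame
    set c0 : Fin d := Fin.castLE hmd i0 with hc0def
    have hc0m : (c0:ℕ) < m := i0.isLt
    have hD : pt x' c0 - pt x c0 = Δ := by
      rw [hpt, hpt, dif_pos hc0m, dif_pos hc0m]
      have he : (⟨(c0:ℕ), hc0m⟩ : Fin m) = i0 := Fin.ext rfl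
      rw [he]
      have hcast : ((x' i0 : ℕ):ℝ) = ((x i0 : ℕ):ℝ) + 1 := by rw [hsucc]; push_cast; ring
      rw [hcast]; ring
    have hS1 := hSdiff x x' c0 Δ hD
    have hS1' := abs_le.mp hS1
    have hlow : Δ - E ≤ S x' c0 - S x c0 := by linarith [hS1'.1]
    have hup : S x' c0 - S x c0 ≤ Δ + E := by linarith [hS1'.2]
    have hex : ∃ j, j < n ∧ a x' j c0 ≠ a x j c0 := by
      by_contra hcon; push_neg at hcon
      have heqS : S x' c0 = S x c0 := by
        rw [hSdef]
        apply Finset.sum_congr rfl; intro j hj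
        rw [hcon j (Finset.mem_range.mp hj)]
      rw [heqS] at hlow; linarith
    set j0 := Nat.find hex with hj0def
    obtain ⟨hj0n, hj0ne⟩ := Nat.find_spec hex
    have hmin : ∀ j, j < j0 → a x' j c0 = a x j c0 := by
      intro j hj
      have hmm := Nat.find_min hex hj
      push_neg at hmm
      exact hmm (by omega)
    have htail := tailbound x x' c0 j0 hj0n hmin
    have htail' := abs_le.mp htail
    set Gr : ℝ := ((a x' j0 c0 : ℕ):ℝ) - ((a x j0 c0 : ℕ):ℝ) with hGr
    have hGr1 : 1 ≤ |Gr| := natgap _ _ (Ne.symm hj0ne)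
    have hcj0 : 0 < c^j0 := pow_pos hc0 j0
    have habsS : |S x' c0 - S x c0| ≤ Δ + E := by
      rw [abs_le]
      constructor
      · linarith [hE0, hΔ]
      · exact hup
    have hA1 : c^j0 * |Gr| ≤ (Δ + E) + δ*c^j0 := by
      have he2 : |c^j0*Gr| ≤ |c^j0*Gr - (S x' c0 - S x c0)| + |S x' c0 - S x c0| := by
        have h := abs_add_le (c^j0*Gr - (S x' c0 - S x c0)) (S x' c0 - S x c0)
        simpa using h
      have he3 : |c^j0*Gr - (S x' c0 - S x c0)| ≤ δ*c^j0 := by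
        rw [abs_sub_comm]; exact htail
      rw [abs_mul, abs_of_nonneg hcj0.le] at he2
      linarith only [he2, he3, habsS]
    have hUb : c^j0 ≤ U := by
      rw [hUdef, le_div_iff₀ hδ1]
      have h12 : c^j0 * 1 ≤ c^j0 * |Gr| := mul_le_mul_of_nonneg_left hGr1 hcj0.le
      linarith only [h12, hA1]
    have hGrpos : 0 < Gr := by
      by_contra hcon; push_neg at hcon
      have h6 : S x' c0 - S x c0 ≤ δ * c^j0 := by
        linarith only [htail'.2, mul_nonpos_of_nonneg_of_nonpos hcj0.le hcon]
      have h7 : δ * c^j0 ≤ δ * U := mul_le_mul_of_nonneg_left hUb hδ.le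
      have h10 : Δ - E ≤ δ * U := by linarith only [hlow, h6, h7]
      have hδU : δ*U*(1-δ) = δ*(Δ+E) := by rw [hUdef]; field_simp
      have h11 : (Δ-E)*(1-δ) ≤ δ*U*(1-δ) := mul_le_mul_of_nonneg_right h10 hδ1.le
      rw [hδU] at h11
      linarith only [h11, hcond2]
    have hGnat : a x j0 c0 < a x' j0 c0 := by
      by_contra hcon; push_neg at hcon
      have : ((a x' j0 c0 : ℕ):ℝ) ≤ ((a x j0 c0 : ℕ):ℝ) := by exact_mod_cast hcon
      rw [hGr] at hGrpos; linarith
    refine ⟨j0, hj0n, ?_, hUb, a x' j0 c0 - a x j0 c0, by omega, ?_, by omega, ?_⟩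
    · -- L ≤ c^j0
      rw [hLdef, div_le_iff₀ hρ0]
      have hGle : Gr ≤ (N:ℝ)-1 := by
        have hb1 := hdb x' j0 hj0n c0
        have hb2 : (0:ℝ) ≤ ((a x j0 c0 : ℕ):ℝ) := Nat.cast_nonneg _
        rw [hGr]; linarith
      have h8 : c^j0 * Gr ≤ c^j0 * ((N:ℝ)-1) := mul_le_mul_of_nonneg_left hGle hcj0.le
      rw [hρdef]
      linarith only [hlow, htail'.2, h8]
    · -- |c^j0 * G - Δ| ≤ E + δ c^j0
      have hGG : ((a x' j0 c0 - a x j0 c0 : ℕ):ℝ) = Gr := by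
        rw [hGr]; push_cast [Nat.cast_sub hGnat.le]; ring
      rw [hGG, abs_le]
      constructor <;> linarith [htail'.1, htail'.2, hS1'.1, hS1'.2]
    · -- cross coordinates
      intro i hi j hj hLj
      by_contra hne2
      have hex2 : ∃ j', j' < n ∧ a x' j' i ≠ a x j' i := ⟨j, hj, hne2⟩
      set j1 := Nat.find hex2 with hj1def
      obtain ⟨hj1n, hj1ne⟩ := Nat.find_spec hex2
      have hj1min : ∀ j', j' < j1 → a x' j' i = a x j' i := by
        intro j' hj'
        have hmm := Nat.find_min hex2 hj'
        push_neg at hmm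
        exact hmm (by omega)
      have hj1le : j1 ≤ j := Nat.find_min' hex2 ⟨hj, hne2⟩
      have htail2 := tailbound x x' i j1 hj1n hj1min
      have hD0 : pt x' i - pt x i = 0 := by
        rw [hpt, hpt]
        by_cases h : (i:ℕ) < m
        · rw [dif_pos h, dif_pos h]
          have hne3 : (⟨(i:ℕ), h⟩ : Fin m) ≠ i0 := by
            intro hcon
            exact hi (congrArg Fin.val hcon)
          rw [hsame _ hne3]; ring
        · rw [dif_neg h, dif_neg h]; ring
      have hS0 := hSdiff x x' i 0 hD0
      rw [sub_zero] at hS0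
      have hGr2 : (1:ℝ) ≤ |((a x' j1 i : ℕ):ℝ) - ((a x j1 i : ℕ):ℝ)| := natgap _ _ (Ne.symm hj1ne)
      have hcj1 : 0 < c^j1 := pow_pos hc0 j1
      have hA2 : c^j1 * |((a x' j1 i : ℕ):ℝ) - ((a x j1 i : ℕ):ℝ)| ≤ E + δ*c^j1 := by
        set SD := S x' i - S x i with hSD
        set Gr2 := ((a x' j1 i : ℕ):ℝ) - ((a x j1 i : ℕ):ℝ) with hGr2d
        have he2 : |c^j1*Gr2| ≤ |c^j1*Gr2 - SD| + |SD| := by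
          have h := abs_add_le (c^j1*Gr2 - SD) SD
          simpa using h
        have he3 : |c^j1*Gr2 - SD| ≤ δ*c^j1 := by rw [abs_sub_comm]; exact htail2
        rw [abs_mul, abs_of_nonneg hcj1.le] at he2
        linarith only [he2, he3, hS0]
      have hlow2 : c^j1 * (1-δ) ≤ E := by
        have h18 : c^j1 * 1 ≤ c^j1 * |((a x' j1 i : ℕ):ℝ) - ((a x j1 i : ℕ):ℝ)| :=
          mul_le_mul_of_nonneg_left hGr2 hcj1.le
        linarith only [h18, hA2]
      have hj1j : c^j ≤ c^j1 := pow_le_pow_of_le_one hc0.le hc1.le hj1le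
      have hLE : L * (1-δ) ≤ E := by
        have h19 : L * (1-δ) ≤ c^j1 * (1-δ) :=
          mul_le_mul_of_nonneg_right (le_trans hLj hj1j) hδ1.le
        linarith only [h19, hlow2]
      rw [hLdef] at hLE
      have hmul : ((Δ-E)/ρ * (1-δ)) * ρ ≤ E * ρ := mul_le_mul_of_nonneg_right hLE hρ0.le
      have h9 : ((Δ-E)/ρ * (1-δ)) * ρ = (Δ-E)*(1-δ) := by field_simp
      rw [h9] at hmul
      linarith only [hmul, hcond4]
  -- ## reference pair fixes the level j* and gap g
  have hk0 : 0 < k := by omega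
  set i0r : Fin m := ⟨0, hm⟩ with hi0r
  set x0 : Fin m → Fin k := fun _ => ⟨0, hk0⟩ with hx0
  set x1 : Fin m → Fin k := Function.update x0 i0r ⟨1, by omega⟩ with hx1
  have hx1a : (x1 i0r : ℕ) = (x0 i0r : ℕ) + 1 := by
    rw [hx1, Function.update_self]
  have hx1b : ∀ i' : Fin m, i' ≠ i0r → x1 i' = x0 i' := by
    intro i' h; rw [hx1, Function.update_of_ne h]
  obtain ⟨jst, hjn, hjL, hjU, g, hg1, hgΔ, -, -⟩ := pair x0 x1 i0r hx1a hx1b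
  -- ## every step moves the level-j* digit by exactly g
  have stepb : ∀ (x x' : Fin m → Fin k) (i0 : Fin m),
      ((x' i0 : ℕ) = (x i0 : ℕ) + 1) → (∀ i' : Fin m, i' ≠ i0 → x' i' = x i') →
      ∀ i : Fin d, a x' jst i = a x jst i + (if (i:ℕ) = (i0:ℕ) then g else 0) := by
    intro x x' i0 h1 h2 i
    obtain ⟨j0, hj0n, hj0L, hj0U, G, hG1, hGΔ', hGdig, hcross⟩ := pair x x' i0 h1 h2
    have hj0 : j0 = jst := hlevel j0 jst hj0L hj0U hjL hjU
    subst hj0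
    have hGg : G = g := by
      have hcst : 0 < c^j0 := pow_pos hc0 j0
      have habs : c^j0 * |(G:ℝ) - (g:ℝ)| ≤ 2*E + 2*(δ*c^j0) := by
        have h3 : |c^j0 * (G:ℝ) - c^j0 * (g:ℝ)| ≤ (E + δ*c^j0) + (E + δ*c^j0) := by
          calc |c^j0 * (G:ℝ) - c^j0 * (g:ℝ)|
              ≤ |c^j0 * (G:ℝ) - Δ| + |Δ - c^j0 * (g:ℝ)| := by
                have := abs_sub_le (c^j0 * (G:ℝ)) Δ (c^j0 * (g:ℝ)); linarith [this]
          _ ≤ (E + δ*c^j0) + (E + δ*c^j0) := by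
                rw [abs_sub_comm Δ] at *; exact add_le_add hGΔ' hgΔ
        calc c^j0 * |(G:ℝ) - (g:ℝ)| = |c^j0 * ((G:ℝ) - (g:ℝ))| := by
              rw [abs_mul, abs_of_nonneg hcst.le]
        _ = |c^j0 * (G:ℝ) - c^j0 * (g:ℝ)| := by ring_nf
        _ ≤ 2*E + 2*(δ*c^j0) := by linarith
      have hsmall : 2*E + 2*(δ*c^j0) < c^j0 := by
        have hLr : Δ - E ≤ c^j0 * ρ := by
          rw [hLdef] at hj0L
          rw [div_le_iff₀ hρ0] at hj0L
          linarith only [hj0L]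
        have h13 : (1-2*δ)*(Δ-E) ≤ (1-2*δ)*(c^j0*ρ) :=
          mul_le_mul_of_nonneg_left hLr (by linarith only [hδ'])
        have h15 : (2*E)*ρ < ((1-2*δ)*c^j0)*ρ := by nlinarith [hcond3, h13]
        have h16 : 2*E < (1-2*δ)*c^j0 := lt_of_mul_lt_mul_right h15 hρ0.le
        linarith only [h16]
      have : |(G:ℝ) - (g:ℝ)| < 1 := by
        have h17 : c^j0 * |(G:ℝ)-(g:ℝ)| < c^j0 * 1 := by linarith only [habs, hsmall]
        exact (mul_lt_mul_iff_right₀ hcst).mp h17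
      by_contra hne
      have h9 := natgap g G (Ne.symm hne)
      linarith
    subst hGg
    by_cases hi : (i:ℕ) = (i0:ℕ)
    · have hieq : i = Fin.castLE hmd i0 := by
        apply Fin.ext; exact hi
      rw [if_pos hi, hieq]
      exact hGdig
    · rw [if_neg hi, add_zero]
      exact hcross i hi _ hjn hjL
  -- ## grid induction
  have grid : ∀ w : ℕ, ∀ x : Fin m → Fin k, (∑ i', (x i' : ℕ)) = w →
      ∀ i : Fin d, a x jst i = a x0 jst i
        + g * (if h : (i:ℕ) < m then (x ⟨(i:ℕ), h⟩ : ℕ) else 0) := by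
    intro w
    induction w with
    | zero =>
      intro x hx i
      have hxx : x = x0 := by
        funext i'
        have h1 : (x i' : ℕ) = 0 := by
          rw [Finset.sum_eq_zero_iff] at hx
          exact hx i' (Finset.mem_univ i')
        apply Fin.ext; rw [h1]
      subst hxx
      by_cases h : (i:ℕ) < m
      · rw [dif_pos h]
        have : ((x0 ⟨(i:ℕ), h⟩ : Fin k) : ℕ) = 0 := rfl
        rw [this, Nat.mul_zero, Nat.add_zero]
      · rw [dif_neg h, Nat.mul_zero, Nat.add_zero]
    | succ w ih =>
      intro x hx i
      obtain ⟨i0, hi0⟩ : ∃ i0 : Fin m, (x i0 : ℕ) ≠ 0 := by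
        by_contra hcon; push_neg at hcon
        rw [Finset.sum_eq_zero (fun i' _ => hcon i')] at hx
        omega
      have hlt : (x i0 : ℕ) - 1 < k := by have := (x i0).isLt; omega
      set xm : Fin m → Fin k := Function.update x i0 ⟨(x i0 : ℕ) - 1, hlt⟩ with hxm
      have hsplitsum : ∀ f : Fin m → Fin k,
          (∑ i', (f i' : ℕ)) = (f i0 : ℕ) + ∑ i' ∈ Finset.univ.erase i0, (f i' : ℕ) :=
        fun f => (Finset.add_sum_erase _ (fun i' => (f i' : ℕ)) (Finset.mem_univ i0)).symm
      have hagree : ∑ i' ∈ Finset.univ.erase i0, (xm i' : ℕ)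
          = ∑ i' ∈ Finset.univ.erase i0, (x i' : ℕ) := by
        apply Finset.sum_congr rfl
        intro i' hi'
        rw [hxm, Function.update_of_ne (Finset.ne_of_mem_erase hi')]
      have hxmi0 : (xm i0 : ℕ) = (x i0 : ℕ) - 1 := by
        rw [hxm, Function.update_self]
      have hsum : (∑ i', (xm i' : ℕ)) = w := by
        have e1 := hsplitsum xm
        have e2 := hsplitsum x
        rw [e2] at hx
        rw [e1, hagree, hxmi0]
        omega
      have h1 : (x i0 : ℕ) = (xm i0 : ℕ) + 1 := by rw [hxmi0]; omega
      have h2 : ∀ i' : Fin m, i' ≠ i0 → x i' = xm i' := by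
        intro i' hne
        rw [hxm, Function.update_of_ne hne]
      have hstep := stepb xm x i0 h1 h2 i
      have hih := ih xm hsum i
      rw [hstep, hih]
      by_cases h : (i:ℕ) < m
      · rw [dif_pos h, dif_pos h]
        by_cases h3 : (i:ℕ) = (i0:ℕ)
        · rw [if_pos h3]
          have he : (⟨(i:ℕ), h⟩ : Fin m) = i0 := Fin.ext h3
          rw [he, hxmi0]
          have hv : (x i0 : ℕ) = ((x i0 : ℕ) - 1) + 1 := by omega
          conv_rhs => rw [hv]
          rw [Nat.mul_succ]
          ring
        · rw [if_neg h3]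
          have hne : (⟨(i:ℕ), h⟩ : Fin m) ≠ i0 := fun hc => h3 (congrArg Fin.val hc)
          rw [hxm, Function.update_of_ne hne]
          ring
      · rw [dif_neg h, dif_neg h]
        have h3 : (i:ℕ) ≠ (i0:ℕ) := fun hc => h (hc ▸ i0.isLt)
        rw [if_neg h3]
        ring
  -- ## conclusion: A contains a patch, contradiction
  apply hfree
  refine ⟨a x0 jst, g, by omega, ?_⟩
  intro x
  have hgr := grid (∑ i', (x i' : ℕ)) x rfl
  have heq : (fun i : Fin d => a x0 jst i
      + g * (if h : (i:ℕ) < m then (x ⟨(i:ℕ), h⟩ : ℕ) else 0)) = a x jst :=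
    funext fun i => (hgr i).symm
  show (fun i : Fin d => a x0 jst i
      + g * (if h : (i:ℕ) < m then (x ⟨(i:ℕ), h⟩ : ℕ) else 0)) ∈ (↑A : Set (Fin d → ℕ))
  rw [heq]
  exact Finset.mem_coe.mpr (haA x jst hjn)
end
end

section
/- Fix integers m, d with 1 ≤ m ≤ d, k ≥ 2, and ε ∈ (0, 1/2). If F ⊆ ℝ^d does not contain any (k, ε, v)-AP for some set v of m orthogonal unit vectors, then dim_A F ≤ d + (1/2)·log(r_{k,m}(⌈√d/ε⌉)/⌈√d/ε⌉^m) / log⌈√d/ε⌉. -/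
open scoped Classical
open Filter

noncomputable section

lemma card_le_rPatch {k d m N : ℕ} {A : Finset (Fin d → ℕ)} (hA : A ⊆ apGrid d N)
    (hP : ¬ HasPatchNat d m k (↑A : Set (Fin d → ℕ))) : A.card ≤ rPatch k d m N :=
  Finset.le_sup (f := Finset.card)
    (Finset.mem_filter.mpr ⟨Finset.mem_powerset.mpr hA, hP⟩)

lemma rPatch_le {k d m N : ℕ} : rPatch k d m N ≤ N ^ d := by
  apply Finset.sup_le
  intro A hA
  simp only [Finset.mem_filter, Finset.mem_powerset] at hA
  calc A.card ≤ (apGrid d N).card := Finset.card_le_card hA.1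
    _ = N ^ d := by
        simp [apGrid, Fintype.card_piFinset, Nat.card_Icc]

lemma one_le_rPatch {k m N : ℕ} (hm : 1 ≤ m) (hk : 2 ≤ k) (hN : 1 ≤ N) :
    1 ≤ rPatch k m m N := by
  have h := card_le_rPatch (k := k) (d := m) (m := m) (N := N)
    (A := {fun _ => 1}) ?_ ?_
  · simpa using h
  · intro x hx
    simp only [Finset.mem_singleton] at hx
    subst hx
    simp [apGrid, Fintype.mem_piFinset, hN]
  · rintro ⟨t, Δ, hΔ, hpt⟩
    have h0 := hpt (fun _ => ⟨0, by omega⟩)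
    have h1 := hpt (fun _ => ⟨1, by omega⟩)
    simp only [Finset.coe_singleton, Set.mem_singleton_iff, funext_iff] at h0 h1
    have hi : (0 : ℕ) < m := hm
    have e0 := h0 ⟨0, by omega⟩
    have e1 := h1 ⟨0, by omega⟩
    simp only [hi, dif_pos] at e0 e1
    omega

def auxCube (d : ℕ) (b : OrthonormalBasis (Fin d) ℝ (EuclideanSpace ℝ (Fin d)))
    (a : Fin d → ℝ) (δ : ℝ) (y : Fin d → ℕ) : Set (EuclideanSpace ℝ (Fin d)) :=
  {z | ∀ i : Fin d, a i + y i * δ ≤ b.repr z i ∧ b.repr z i ≤ a i + (y i + 1) * δ}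

lemma dist_le_sqrt {d : ℕ} (b : OrthonormalBasis (Fin d) ℝ (EuclideanSpace ℝ (Fin d)))
    {z w : EuclideanSpace ℝ (Fin d)} {δ : ℝ} (hδ : 0 ≤ δ)
    (h : ∀ i : Fin d, |b.repr z i - b.repr w i| ≤ δ) :
    dist z w ≤ Real.sqrt d * δ := by
  have : dist z w = dist (b.repr z) (b.repr w) := (b.repr.dist_map z w).symm
  rw [this, EuclideanSpace.dist_eq]
  have hb : ∀ i : Fin d, dist (b.repr z i) (b.repr w i) ^ 2 ≤ δ ^ 2 := by
    intro i
    rw [Real.dist_eq]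
    exact pow_le_pow_left₀ (abs_nonneg _) (h i) 2
  calc Real.sqrt (∑ i, dist (b.repr z i) (b.repr w i) ^ 2)
      ≤ Real.sqrt (∑ _i : Fin d, δ ^ 2) :=
        Real.sqrt_le_sqrt (Finset.sum_le_sum fun i _ => hb i)
    _ = Real.sqrt d * δ := by
        rw [Finset.sum_const, Finset.card_univ, Fintype.card_fin, nsmul_eq_mul,
          Real.sqrt_mul (by positivity), Real.sqrt_sq hδ]

lemma auxCube_diam {d : ℕ} (b : OrthonormalBasis (Fin d) ℝ (EuclideanSpace ℝ (Fin d)))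
    (a : Fin d → ℝ) {δ : ℝ} (hδ : 0 ≤ δ) (y : Fin d → ℕ) :
    Metric.diam (auxCube d b a δ y) ≤ Real.sqrt d * δ := by
  apply Metric.diam_le_of_forall_dist_le (by positivity)
  intro z hz w hw
  apply dist_le_sqrt b hδ
  intro i
  have h1 := hz i
  have h2 := hw i
  rw [abs_le]
  constructor <;> nlinarith [h1.1, h1.2, h2.1, h2.2]

lemma card_filter_lt (d m : ℕ) (hmd : m ≤ d) :
    (Finset.univ.filter (fun i : Fin d => (i : ℕ) < m)).card = m := by
  have he : Finset.univ.filter (fun i : Fin d => (i : ℕ) < m) =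
      (Finset.range m).attachFin
        (fun x hx => lt_of_lt_of_le (Finset.mem_range.mp hx) hmd) := by
    ext i
    simp [Finset.mem_attachFin]
  rw [he, Finset.card_attachFin, Finset.card_range]

lemma core_count (k d m : ℕ) (hm : 1 ≤ m) (hmd : m ≤ d) (hk : 2 ≤ k) {ε : ℝ} (hε : 0 < ε)
    (F : Set (EuclideanSpace ℝ (Fin d))) (v : Fin m → EuclideanSpace ℝ (Fin d))
    (b : OrthonormalBasis (Fin d) ℝ (EuclideanSpace ℝ (Fin d)))
    (hb : ∀ (j : Fin d) (h : (j : ℕ) < m), b j = v ⟨j, h⟩)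
    (hnoAP : ¬ ContainsAP d m k ε v F)
    {N : ℕ} (hN : Real.sqrt d / ε ≤ N) (hN1 : 1 ≤ N)
    (a : Fin d → ℝ) {δ : ℝ} (hδ : 0 < δ) :
    ((Fintype.piFinset fun _ : Fin d => Finset.range (N^2)).filter
      (fun y => (auxCube d b a δ y ∩ F).Nonempty)).card ≤ rPatch k m m N * N ^ (2*d - m) := by
  set s := ((Fintype.piFinset fun _ : Fin d => Finset.range (N^2)).filter
      (fun y => (auxCube d b a δ y ∩ F).Nonempty)) with hs
  set f : (Fin d → ℕ) → (Fin d → ℕ) := fun y i => if (i : ℕ) < m then y i % N else y i with hf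
  have key : ∀ w ∈ s.image f, (s.filter (fun y => f y = w)).card ≤ rPatch k m m N := by
    intro w hw
    set fib := s.filter (fun y => f y = w) with hfib
    set g : (Fin d → ℕ) → (Fin m → ℕ) :=
      fun y i => y ⟨i, lt_of_lt_of_le i.2 hmd⟩ / N + 1 with hg
    have hmem : ∀ y ∈ fib, (y ∈ Fintype.piFinset fun _ : Fin d => Finset.range (N^2)) ∧
        (auxCube d b a δ y ∩ F).Nonempty ∧ f y = w := by
      intro y hy
      simp only [hfib, hs, Finset.mem_filter] at hy
      exact ⟨hy.1.1, hy.1.2, hy.2⟩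
    -- basic facts about members of the fiber
    have hcoord : ∀ y ∈ fib, ∀ j : Fin d,
        (∀ hj : (j : ℕ) < m, y j = N * (g y ⟨j, hj⟩ - 1) + w j ∧ 1 ≤ g y ⟨j, hj⟩)
        ∧ (¬ (j : ℕ) < m → y j = w j) := by
      intro y hy j
      obtain ⟨-, -, hy3⟩ := hmem y hy
      constructor
      · intro hj
        have e1 : y j % N = w j := by rw [← hy3]; simp [hf, hj]
        have e2 : g y ⟨j, hj⟩ = y j / N + 1 := by simp [hg]
        constructor
        · rw [e2, Nat.add_sub_cancel]
          have := Nat.div_add_mod (y j) N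
          omega
        · rw [e2]
          exact Nat.le_add_left 1 _
      · intro hj
        rw [← hy3]; simp [hf, hj]
    have hinj : Set.InjOn g fib := by
      intro y hy y' hy' hgy
      funext j
      by_cases hj : (j : ℕ) < m
      · have e1 := ((hcoord y hy j).1 hj).1
        have e2 := ((hcoord y' hy' j).1 hj).1
        rw [e1, e2, congrFun hgy ⟨j, hj⟩]
      · have e1 := (hcoord y hy j).2 hj
        have e2 := (hcoord y' hy' j).2 hj
        rw [e1, e2]
    have hsub : fib.image g ⊆ apGrid m N := by
      intro q hq
      obtain ⟨y, hy, rfl⟩ := Finset.mem_image.mp hq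
      obtain ⟨hy1, -, -⟩ := hmem y hy
      simp only [apGrid, Fintype.mem_piFinset, Finset.mem_Icc]
      intro i
      have hlt : y ⟨i, lt_of_lt_of_le i.2 hmd⟩ < N ^ 2 := by
        have := (Fintype.mem_piFinset.mp hy1) ⟨i, lt_of_lt_of_le i.2 hmd⟩
        simpa using this
      have hdiv : y ⟨i, lt_of_lt_of_le i.2 hmd⟩ / N < N := by
        apply Nat.div_lt_of_lt_mul
        rw [← sq]
        exact hlt
      simp only [hg]
      exact ⟨Nat.le_add_left 1 _, Nat.succ_le_of_lt hdiv⟩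
    have hnp : ¬ HasPatchNat m m k (↑(fib.image g) : Set (Fin m → ℕ)) := by
      rintro ⟨t, Δi, hΔi, hpt⟩
      apply hnoAP
      have hc : ∀ x : Fin m → Fin k, ∃ y, y ∈ fib ∧ g y =
          (fun i : Fin m => t i + Δi * (if h : (i : ℕ) < m then (x ⟨i, h⟩ : ℕ) else 0)) := by
        intro x
        have := hpt x
        rw [Finset.mem_coe, Finset.mem_image] at this
        obtain ⟨y, hy, hgy⟩ := this
        exact ⟨y, hy, hgy⟩
      choose Y hY hgY using hc
      have hpt' : ∀ (x : Fin m → Fin k) (i : Fin m),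
          g (Y x) i = t i + Δi * (x i : ℕ) := by
        intro x i
        have h1 := congrFun (hgY x) i
        rw [h1, dif_pos i.2, Fin.eta]
      have hk0 : 0 < k := by omega
      set x0 : Fin m → Fin k := fun _ => ⟨0, hk0⟩ with hx0
      have ht1 : ∀ i : Fin m, 1 ≤ t i := by
        intro i
        have h0 : g (Y x0) i = t i + Δi * 0 := hpt' x0 i
        rw [Nat.mul_zero, Nat.add_zero] at h0
        have h1 := ((hcoord _ (hY x0)
          ⟨i, lt_of_lt_of_le i.2 hmd⟩).1 (by simpa using i.2)).2
        exact le_of_le_of_eq h1 h0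
      set Δr : ℝ := (Δi : ℝ) * N * δ with hΔr
      have hΔi1 : (1:ℝ) ≤ (Δi : ℝ) := by exact_mod_cast hΔi
      have hN1' : (1:ℝ) ≤ (N : ℝ) := by exact_mod_cast hN1
      have hΔrpos : 0 < Δr := by positivity
      set T : EuclideanSpace ℝ (Fin d) := b.repr.symm (WithLp.toLp 2 (fun j : Fin d =>
        if h : (j : ℕ) < m then a j + w j * δ + (N:ℝ) * δ * ((t ⟨j, h⟩ : ℝ) - 1)
        else a j + w j * δ : Fin d → ℝ)) with hT
      refine ⟨T, Δr, hΔrpos, ?_⟩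
      intro x
      obtain ⟨hY1, ⟨fz, hfzc, hfzF⟩, hY3⟩ := hmem (Y x) (hY x)
      set P := T + Δr • ∑ i, ((x i : ℕ) : ℝ) • v i with hP
      have hPcoord : ∀ j : Fin d, b.repr P j = a j + (Y x j : ℝ) * δ := by
        intro j
        have hrepr : b.repr P = b.repr T + Δr • ∑ i, ((x i : ℕ) : ℝ) • b.repr (v i) := by
          simp [hP, map_add, map_smul, map_sum]
        have hvT : b.repr T = (WithLp.toLp 2 (fun j : Fin d =>
            if h : (j : ℕ) < m then a j + w j * δ + (N:ℝ) * δ * ((t ⟨j, h⟩ : ℝ) - 1)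
            else a j + w j * δ : Fin d → ℝ) : EuclideanSpace ℝ (Fin d)) := by
          rw [hT, LinearIsometryEquiv.apply_symm_apply]
        have hsum : (∑ i : Fin m, ((x i : ℕ) : ℝ) • b.repr (v i)) j =
            if h : (j : ℕ) < m then ((x ⟨j, h⟩ : ℕ) : ℝ) else 0 := by
          have hv : ∀ i : Fin m, b.repr (v i) =
              EuclideanSpace.single (⟨i, lt_of_lt_of_le i.2 hmd⟩ : Fin d) (1:ℝ) := by
            intro i
            have hbi : b ⟨(i:ℕ), lt_of_lt_of_le i.2 hmd⟩ = v i := by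
              have := hb ⟨(i:ℕ), lt_of_lt_of_le i.2 hmd⟩ (by simpa using i.2)
              rw [this]
            rw [← hbi, b.repr_self]
          rw [WithLp.ofLp_sum, Finset.sum_apply]
          simp only [PiLp.smul_apply, hv, EuclideanSpace.single_apply, smul_eq_mul,
            mul_ite, mul_one, mul_zero]
          by_cases hj : (j : ℕ) < m
          · rw [dif_pos hj, Finset.sum_eq_single (⟨(j:ℕ), hj⟩ : Fin m)]
            · rw [if_pos (by ext; rfl)]
            · intro i _ hne
              rw [if_neg]
              intro hcon
              apply hne
              ext
              exact (congrArg Fin.val hcon).symm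
            · intro h; exact absurd (Finset.mem_univ _) h
          · rw [dif_neg hj]
            apply Finset.sum_eq_zero
            intro i _
            rw [if_neg]
            intro hcon
            apply hj
            rw [congrArg Fin.val hcon]
            simpa using i.2
        have happ : b.repr P j = b.repr T j + Δr * ((∑ i, ((x i : ℕ) : ℝ) • b.repr (v i)) j) := by
          rw [hrepr]; rfl
        rw [happ, hsum, hvT]
        by_cases hj : (j : ℕ) < m
        · simp only [PiLp.toLp_apply, dif_pos hj]
          have hyj := ((hcoord (Y x) (hY x) j).1 hj).1
          have hgx : g (Y x) ⟨j, hj⟩ = t ⟨j, hj⟩ + Δi * ((x ⟨j, hj⟩ : ℕ)) := hpt' x ⟨j, hj⟩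
          rw [hgx] at hyj
          have ht := ht1 ⟨j, hj⟩
          have : (Y x j : ℝ) = N * ((t ⟨j, hj⟩ : ℝ) - 1 + Δi * ((x ⟨j, hj⟩ : ℕ) : ℝ)) + w j := by
            rw [hyj]
            have : t ⟨j, hj⟩ + Δi * ((x ⟨j, hj⟩ : ℕ)) - 1 = (t ⟨j, hj⟩ - 1) + Δi * ((x ⟨j, hj⟩ : ℕ)) := by omega
            rw [this]
            push_cast [ht]
            ring
          rw [this, hΔr]
          ring
        · simp only [PiLp.toLp_apply, dif_neg hj]
          have hyj := (hcoord (Y x) (hY x) j).2 hj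
          rw [hyj]
          ring
      have hdist : dist P fz ≤ Real.sqrt d * δ := by
        apply dist_le_sqrt b (le_of_lt hδ)
        intro i
        rw [hPcoord i]
        have h1 := hfzc i
        rw [abs_le]
        constructor <;> nlinarith [h1.1, h1.2]
      have hinf : Metric.infDist P F ≤ Real.sqrt d * δ :=
        le_trans (Metric.infDist_le_dist_of_mem hfzF) hdist
      refine le_trans hinf ?_
      have hsd : Real.sqrt d ≤ ε * N := by
        rw [div_le_iff₀ hε] at hN
        linarith [hN]
      calc Real.sqrt d * δ ≤ (ε * N) * δ := by
            apply mul_le_mul_of_nonneg_right hsd (le_of_lt hδ)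
        _ ≤ ε * Δr := by
            rw [hΔr]
            have : (N:ℝ) * δ ≤ (Δi:ℝ) * N * δ := by nlinarith
            calc ε * N * δ = ε * ((N:ℝ) * δ) := by ring
              _ ≤ ε * ((Δi:ℝ) * N * δ) := by nlinarith
    calc fib.card = (fib.image g).card := (Finset.card_image_of_injOn hinj).symm
      _ ≤ rPatch k m m N := card_le_rPatch hsub hnp
  calc s.card ≤ rPatch k m m N * (s.image f).card := Finset.card_le_mul_card_image s _ key
    _ ≤ rPatch k m m N * N ^ (2*d - m) := by
        apply Nat.mul_le_mul_left
        have himg : s.image f ⊆ Fintype.piFinset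
            (fun i : Fin d => if (i : ℕ) < m then Finset.range N else Finset.range (N^2)) := by
          intro y hy
          obtain ⟨z, hz, rfl⟩ := Finset.mem_image.mp hy
          simp only [hs, Finset.mem_filter] at hz
          have hz1 := Fintype.mem_piFinset.mp hz.1
          rw [Fintype.mem_piFinset]
          intro i
          by_cases hi : (i : ℕ) < m
          · have hlt : z i % N < N := Nat.mod_lt _ (by omega)
            simp [hf, hi, hlt]
          · simpa [hf, hi] using hz1 i
        calc (s.image f).card ≤ _ := Finset.card_le_card himg
          _ = N ^ (2*d - m) := by
            rw [Fintype.card_piFinset]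
            have : ∀ i : Fin d, (if (i : ℕ) < m then Finset.range N
                else Finset.range (N^2)).card = if (i : ℕ) < m then N else N^2 := by
              intro i
              by_cases hi : (i : ℕ) < m <;> simp [hi]
            rw [Finset.prod_congr rfl (fun i _ => this i), Finset.prod_ite]
            rw [Finset.prod_const, Finset.prod_const]
            rw [card_filter_lt d m hmd]
            have hcc : (Finset.univ.filter (fun i : Fin d => ¬ (i : ℕ) < m)).card = d - m := by
              have := Finset.card_filter_add_card_filter_not
                (s := (Finset.univ : Finset (Fin d))) (p := fun i : Fin d => (i : ℕ) < m)
              rw [card_filter_lt d m hmd] at this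
              simp only [Finset.card_univ, Fintype.card_fin] at this
              omega
            rw [hcc, ← pow_mul, ← pow_add]
            congr 1
            omega

lemma auxCube_congr {d : ℕ} (b : OrthonormalBasis (Fin d) ℝ (EuclideanSpace ℝ (Fin d)))
    {a a' : Fin d → ℝ} {δ : ℝ} {y y' : Fin d → ℕ}
    (h : ∀ i, a i + (y i : ℝ) * δ = a' i + (y' i : ℝ) * δ) :
    auxCube d b a δ y = auxCube d b a' δ y' := by
  ext z
  simp only [auxCube, Set.mem_setOf_eq]
  apply forall_congr'
  intro i
  rw [show a i + ((y i : ℝ) + 1) * δ = (a i + (y i : ℝ) * δ) + δ by ring,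
    show a' i + ((y' i : ℝ) + 1) * δ = (a' i + (y' i : ℝ) * δ) + δ by ring, h i]

lemma iter_count (k d m : ℕ) (hm : 1 ≤ m) (hmd : m ≤ d) (hk : 2 ≤ k) {ε : ℝ} (hε : 0 < ε)
    (F : Set (EuclideanSpace ℝ (Fin d))) (v : Fin m → EuclideanSpace ℝ (Fin d))
    (b : OrthonormalBasis (Fin d) ℝ (EuclideanSpace ℝ (Fin d)))
    (hb : ∀ (j : Fin d) (h : (j : ℕ) < m), b j = v ⟨j, h⟩)
    (hnoAP : ¬ ContainsAP d m k ε v F)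
    {N : ℕ} (hN : Real.sqrt d / ε ≤ N) (hN1 : 1 ≤ N)
    {ℓ : ℝ} (hℓ : 0 < ℓ) (a : Fin d → ℝ) (p : ℕ) :
    ((Fintype.piFinset fun _ : Fin d => Finset.range ((N^2)^p)).filter
      (fun y => (auxCube d b a (ℓ / (N^2)^p) y ∩ F).Nonempty)).card
      ≤ (rPatch k m m N * N ^ (2*d - m)) ^ p := by
  induction p generalizing a with
  | zero =>
      simp only [pow_zero]
      calc _ ≤ (Fintype.piFinset fun _ : Fin d => Finset.range 1).card :=
            Finset.card_filter_le _ _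
        _ = 1 := by simp [Fintype.card_piFinset]
  | succ p ih =>
      set K := rPatch k m m N * N ^ (2*d - m) with hK
      set δ' : ℝ := ℓ / (N^2)^(p+1) with hδ'
      set δp : ℝ := ℓ / (N^2)^p with hδp
      have hNpos : (0:ℝ) < (N:ℝ)^2 := by
        have : (1:ℝ) ≤ (N:ℝ) := by exact_mod_cast hN1
        positivity
      have hδ'pos : 0 < δ' := by
        rw [hδ']
        apply div_pos hℓ
        positivity
      have hδpδ' : δp = (N^2 : ℕ) * δ' := by
        rw [hδp, hδ']
        push_cast
        rw [pow_succ]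
        field_simp
        ring
      set s' := ((Fintype.piFinset fun _ : Fin d => Finset.range ((N^2)^(p+1))).filter
        (fun y => (auxCube d b a δ' y ∩ F).Nonempty)) with hs'
      set G : (Fin d → ℕ) → (Fin d → ℕ) := fun y i => y i / N^2 with hG
      have hN2 : 0 < N^2 := by positivity
      -- image of G lands in the level-p occupied set
      have himg : s'.image G ⊆ ((Fintype.piFinset fun _ : Fin d => Finset.range ((N^2)^p)).filter
          (fun y => (auxCube d b a δp y ∩ F).Nonempty)) := by
        intro z hz
        obtain ⟨y, hy, rfl⟩ := Finset.mem_image.mp hz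
        simp only [hs', Finset.mem_filter] at hy
        obtain ⟨hy1, hy2⟩ := hy
        rw [Finset.mem_filter]
        constructor
        · rw [Fintype.mem_piFinset]
          intro i
          have := Fintype.mem_piFinset.mp hy1 i
          rw [Finset.mem_range] at this ⊢
          apply Nat.div_lt_of_lt_mul
          rw [pow_succ'] at this
          exact this
        · -- fine cube contained in coarse cube
          apply Set.Nonempty.mono (Set.inter_subset_inter_left F ?_) hy2
          intro z hz
          intro i
          have h1 := hz i
          have hq := Nat.div_add_mod (y i) (N^2)
          have hle : ((G y i : ℝ)) * (N^2 : ℕ) ≤ (y i : ℝ) := by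
            have h2 : G y i * N^2 ≤ y i := Nat.div_mul_le_self _ _
            exact_mod_cast h2
          have hge : ((y i : ℝ)) + 1 ≤ ((G y i : ℝ) + 1) * (N^2 : ℕ) := by
            have h2 : y i + 1 ≤ (G y i + 1) * N^2 := by
              have h3 : y i % N^2 < N^2 := Nat.mod_lt _ hN2
              calc y i + 1 = N^2 * (y i / N^2) + y i % N^2 + 1 := by rw [Nat.div_add_mod]
                _ ≤ N^2 * (y i / N^2) + N^2 := by omega
                _ = (y i / N^2 + 1) * N^2 := by ring
            exact_mod_cast h2
          constructor
          · calc a i + (G y i : ℝ) * δp = a i + ((G y i : ℝ) * (N^2:ℕ)) * δ' := by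
                  rw [hδpδ']; ring
              _ ≤ a i + (y i : ℝ) * δ' := by nlinarith
              _ ≤ b.repr z i := h1.1
          · calc b.repr z i ≤ a i + ((y i : ℝ) + 1) * δ' := h1.2
              _ ≤ a i + (((G y i : ℝ) + 1) * (N^2:ℕ)) * δ' := by nlinarith
              _ = a i + ((G y i : ℝ) + 1) * δp := by rw [hδpδ']; ring
      -- fibers have size at most K
      have key : ∀ z ∈ s'.image G, (s'.filter (fun y => G y = z)).card ≤ K := by
        intro z hz
        set a' : Fin d → ℝ := fun i => a i + z i * δp with ha'
        set H : (Fin d → ℕ) → (Fin d → ℕ) := fun y i => y i % N^2 with hH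
        have hinj : Set.InjOn H (s'.filter (fun y => G y = z)) := by
          intro y hy y' hy' hH'
          simp only [Finset.coe_filter, Set.mem_setOf_eq] at hy hy'
          funext i
          have e1 : y i / N^2 = z i := congrFun hy.2 i
          have e2 : y' i / N^2 = z i := congrFun hy'.2 i
          have e3 : y i % N^2 = y' i % N^2 := congrFun hH' i
          have d1 := Nat.div_add_mod (y i) (N^2)
          have d2 := Nat.div_add_mod (y' i) (N^2)
          rw [e1, e3] at d1
          rw [e2] at d2
          exact d1.symm.trans d2
        have hsubH : (s'.filter (fun y => G y = z)).image H ⊆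
            ((Fintype.piFinset fun _ : Fin d => Finset.range (N^2)).filter
              (fun y => (auxCube d b a' δ' y ∩ F).Nonempty)) := by
          intro q hq
          obtain ⟨y, hy, rfl⟩ := Finset.mem_image.mp hq
          simp only [Finset.mem_filter, hs'] at hy
          obtain ⟨⟨hy1, hy2⟩, hy3⟩ := hy
          rw [Finset.mem_filter]
          constructor
          · rw [Fintype.mem_piFinset]
            intro i
            rw [Finset.mem_range]
            simp only [hH]
            exact Nat.mod_lt _ hN2
          · have hEq : auxCube d b a δ' y = auxCube d b a' δ' (H y) := by
              apply auxCube_congr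
              intro i
              have e1 : y i = N^2 * z i + y i % N^2 := by
                have e0 : y i / N^2 = z i := congrFun hy3 i
                have d1 := Nat.div_add_mod (y i) (N^2)
                rw [e0] at d1
                exact d1.symm
              have : (y i : ℝ) = (N^2 : ℕ) * (z i : ℝ) + ((y i % N^2 : ℕ) : ℝ) := by
                exact_mod_cast congrArg (Nat.cast : ℕ → ℝ) e1
              simp only [ha', hH]
              rw [this, hδpδ']
              push_cast
              ring
            rw [← hEq]
            exact hy2
        calc (s'.filter (fun y => G y = z)).card
            = ((s'.filter (fun y => G y = z)).image H).card :=
              (Finset.card_image_of_injOn hinj).symm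
          _ ≤ _ := Finset.card_le_card hsubH
          _ ≤ K := core_count k d m hm hmd hk hε F v b hb hnoAP hN hN1 a' hδ'pos
      calc s'.card ≤ K * (s'.image G).card := Finset.card_le_mul_card_image s' K key
        _ ≤ K * K ^ p := Nat.mul_le_mul_left K (le_trans (Finset.card_le_card himg) (ih a))
        _ = K ^ (p+1) := by rw [pow_succ]; ring

set_option maxHeartbeats 2000000 in
lemma cover_bound (k d m : ℕ) (hm : 1 ≤ m) (hmd : m ≤ d) (hk : 2 ≤ k) {ε : ℝ} (hε : 0 < ε)
    (F : Set (EuclideanSpace ℝ (Fin d))) (v : Fin m → EuclideanSpace ℝ (Fin d))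
    (b : OrthonormalBasis (Fin d) ℝ (EuclideanSpace ℝ (Fin d)))
    (hb : ∀ (j : Fin d) (h : (j : ℕ) < m), b j = v ⟨j, h⟩)
    (hnoAP : ¬ ContainsAP d m k ε v F)
    {N : ℕ} (hN : Real.sqrt d / ε ≤ N) (hN1 : 1 ≤ N)
    (x : EuclideanSpace ℝ (Fin d)) {R r : ℝ} (hr : 0 < r) (hR : 0 < R) (p : ℕ)
    (hp : Real.sqrt d * (2 * R / ((N:ℝ)^2)^p) ≤ r) :
    coverNum (Metric.closedBall x R ∩ F) r ≤ (rPatch k m m N * N ^ (2*d - m)) ^ p := by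
  have hN1' : (1:ℝ) ≤ (N:ℝ) := by exact_mod_cast hN1
  set ℓ : ℝ := 2 * R with hℓdef
  have hℓ : 0 < ℓ := by rw [hℓdef]; linarith
  set δ : ℝ := ℓ / ((N:ℝ)^2)^p with hδdef
  have hX : (0:ℝ) < ((N:ℝ)^2)^p := by positivity
  have hδpos : 0 < δ := div_pos hℓ hX
  set a : Fin d → ℝ := fun i => b.repr x i - R with ha
  set S := ((Fintype.piFinset fun _ : Fin d => Finset.range ((N^2)^p)).filter
      (fun y => (auxCube d b a δ y ∩ F).Nonempty)) with hS
  have hNp1 : 1 ≤ (N^2)^p := Nat.one_le_pow _ _ (by positivity)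
  have hcast : (((N^2)^p : ℕ) : ℝ) = ((N:ℝ)^2)^p := by push_cast; ring
  have h1 : coverNum (Metric.closedBall x R ∩ F) r ≤ (S.image (auxCube d b a δ)).card := by
    apply Nat.sInf_le
    refine ⟨S.image (auxCube d b a δ), rfl, ?_, ?_⟩
    · intro s hs
      obtain ⟨y, -, rfl⟩ := Finset.mem_image.mp hs
      refine le_trans (auxCube_diam b a (le_of_lt hδpos) y) ?_
      calc Real.sqrt d * δ = Real.sqrt d * (2 * R / ((N:ℝ)^2)^p) := by rw [hδdef, hℓdef]
        _ ≤ r := hp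
    · intro z hz
      obtain ⟨hz1, hz2⟩ := hz
      have hzx : dist z x ≤ R := Metric.mem_closedBall.mp hz1
      have hcz : ∀ i : Fin d, |b.repr z i - b.repr x i| ≤ R := by
        intro i
        have e1 : |b.repr z i - b.repr x i| = dist (b.repr z i) (b.repr x i) :=
          (Real.dist_eq _ _).symm
        have e2 : dist (b.repr z i) (b.repr x i) ≤ dist (b.repr z) (b.repr x) := by
          rw [EuclideanSpace.dist_eq]
          calc dist (b.repr z i) (b.repr x i)
              = Real.sqrt (dist (b.repr z i) (b.repr x i) ^ 2) :=
                (Real.sqrt_sq dist_nonneg).symm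
            _ ≤ _ := Real.sqrt_le_sqrt (Finset.single_le_sum
                (f := fun j => dist (b.repr z j) (b.repr x j) ^ 2)
                (fun j _ => sq_nonneg _) (Finset.mem_univ i))
        rw [e1]
        calc dist (b.repr z i) (b.repr x i) ≤ dist (b.repr z) (b.repr x) := e2
          _ = dist z x := b.repr.dist_map z x
          _ ≤ R := hzx
      set y : Fin d → ℕ := fun i =>
        min ⌊(b.repr z i - a i) / δ⌋₊ ((N^2)^p - 1) with hy
      have hbound : ∀ i : Fin d, 0 ≤ b.repr z i - a i ∧ b.repr z i - a i ≤ ℓ := by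
        intro i
        have := hcz i
        rw [abs_le] at this
        constructor
        · simp only [ha]; linarith [this.2]
        · simp only [ha, hℓdef]; linarith [this.1]
      have hcube : z ∈ auxCube d b a δ y := by
        intro i
        obtain ⟨hb1, hb2⟩ := hbound i
        constructor
        · have hle1 : (y i : ℝ) ≤ (b.repr z i - a i) / δ := by
            calc (y i : ℝ) ≤ (⌊(b.repr z i - a i) / δ⌋₊ : ℝ) := by
                  exact_mod_cast Nat.cast_le.mpr (min_le_left _ _)
              _ ≤ _ := Nat.floor_le (by positivity)
          have := (le_div_iff₀ hδpos).mp hle1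
          linarith
        · by_cases hcase : ⌊(b.repr z i - a i) / δ⌋₊ ≤ (N^2)^p - 1
          · have hyi : y i = ⌊(b.repr z i - a i) / δ⌋₊ := min_eq_left hcase
            have hlt : (b.repr z i - a i) / δ < (y i : ℝ) + 1 := by
              rw [hyi]
              exact_mod_cast Nat.lt_floor_add_one ((b.repr z i - a i) / δ)
            have := (div_lt_iff₀ hδpos).mp hlt
            linarith
          · have hyi : y i = (N^2)^p - 1 :=
              min_eq_right (le_of_not_ge (fun h => hcase (le_trans (by omega) h)))
            have hyi1 : ((y i : ℝ) + 1) = (((N^2)^p : ℕ) : ℝ) := by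
              rw [hyi]
              have : ((N^2)^p - 1 : ℕ) + 1 = (N^2)^p := by omega
              exact_mod_cast congrArg (Nat.cast : ℕ → ℝ) this
            have hXδ : (((N^2)^p : ℕ) : ℝ) * δ = ℓ := by
              rw [hcast, hδdef]
              field_simp
            calc b.repr z i ≤ a i + ℓ := by linarith
              _ = a i + ((y i : ℝ) + 1) * δ := by rw [hyi1, hXδ]
      have hyS : y ∈ S := by
        rw [hS, Finset.mem_filter]
        constructor
        · rw [Fintype.mem_piFinset]
          intro i
          rw [Finset.mem_range]
          calc y i ≤ (N^2)^p - 1 := min_le_right _ _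
            _ < (N^2)^p := by omega
        · exact ⟨z, hcube, hz2⟩
      rw [Set.mem_sUnion]
      exact ⟨auxCube d b a δ y, Finset.mem_coe.mpr (Finset.mem_image_of_mem _ hyS), hcube⟩
  calc coverNum (Metric.closedBall x R ∩ F) r ≤ _ := h1
    _ ≤ S.card := Finset.card_image_le
    _ ≤ (rPatch k m m N * N ^ (2*d - m)) ^ p :=
        iter_count k d m hm hmd hk hε F v b hb hnoAP hN hN1 hℓ a p

set_option maxHeartbeats 2000000 in
theorem assouad_upper_bound_special (k d m : ℕ) (hm : 1 ≤ m) (hmd : m ≤ d) (hk : 2 ≤ k)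
    (ε : ℝ) (hε : 0 < ε) (hε' : ε < 1/2)
    (F : Set (EuclideanSpace ℝ (Fin d)))
    (hF : ∃ v : Fin m → EuclideanSpace ℝ (Fin d),
      Orthonormal ℝ v ∧ ¬ ContainsAP d m k ε v F) :
    assouadDim F ≤ (d : ℝ) + (1/2) *
      (Real.log ((rPatch k m m ⌈Real.sqrt d / ε⌉₊ : ℝ) / (⌈Real.sqrt d / ε⌉₊ : ℝ) ^ m) /
        Real.log (⌈Real.sqrt d / ε⌉₊ : ℝ)) := by
  obtain ⟨v, hv, hnoAP⟩ := hF
  set N : ℕ := ⌈Real.sqrt d / ε⌉₊ with hNdef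
  have hd1 : (1:ℝ) ≤ Real.sqrt d := Real.one_le_sqrt.mpr (by exact_mod_cast hm.trans hmd)
  have hNge : Real.sqrt d / ε ≤ (N : ℝ) := Nat.le_ceil _
  have h2ε : (2:ℝ) < 1 / ε := by rw [lt_div_iff₀ hε]; linarith
  have h1ε : (1:ℝ) / ε ≤ Real.sqrt d / ε := by gcongr
  have hN2 : (2:ℝ) < (N:ℝ) := by
    calc (2:ℝ) < 1/ε := h2ε
      _ ≤ Real.sqrt d / ε := h1ε
      _ ≤ N := hNge
  have hN1 : 1 ≤ N := by exact_mod_cast le_of_lt (lt_of_le_of_lt (by norm_num : (1:ℝ) ≤ 2) hN2)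
  have hlogN : 0 < Real.log N := Real.log_pos (by linarith)
  -- extend v to an orthonormal basis
  set v' : Fin d → EuclideanSpace ℝ (Fin d) :=
    fun j => if h : (j : ℕ) < m then v ⟨j, h⟩ else 0 with hv'
  have hres : Orthonormal ℝ (Set.restrict {j : Fin d | (j : ℕ) < m} v') := by
    have hinj : Function.Injective
        (fun j : {j : Fin d // (j : ℕ) < m} => (⟨(j.1 : ℕ), j.2⟩ : Fin m)) := by
      intro a b hab
      simp only [Fin.mk.injEq] at hab
      exact Subtype.ext (Fin.ext hab)
    have he : Set.restrict {j : Fin d | (j : ℕ) < m} v' =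
        v ∘ (fun j : {j : Fin d // (j : ℕ) < m} => (⟨(j.1 : ℕ), j.2⟩ : Fin m)) := by
      funext j
      show v' j.1 = v ⟨(j.1 : ℕ), j.2⟩
      exact dif_pos j.2
    rw [he]
    exact hv.comp _ hinj
  obtain ⟨b, hb'⟩ := hres.exists_orthonormalBasis_extension_of_card_eq
    (by simp [finrank_euclideanSpace_fin])
  have hb : ∀ (j : Fin d) (h : (j : ℕ) < m), b j = v ⟨j, h⟩ := by
    intro j h
    rw [hb' j h]
    simp only [hv', dif_pos h]
  -- arithmetic setup
  set rN : ℝ := (rPatch k m m N : ℝ) with hrN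
  set L : ℝ := Real.log (rN / (N:ℝ)^m) with hL
  set σ : ℝ := (d : ℝ) + (1/2) * (L / Real.log N) with hσ
  have hrN1 : (1:ℝ) ≤ rN := by
    rw [hrN]
    exact_mod_cast one_le_rPatch hm hk hN1
  have hrNle : rN ≤ (N:ℝ)^m := by
    rw [hrN]
    exact_mod_cast rPatch_le
  have hNm : (0:ℝ) < (N:ℝ)^m := by positivity
  have hLle : L ≤ 0 := Real.log_nonpos (by positivity) ((div_le_one hNm).mpr hrNle)
  have hLge : -(m:ℝ) * Real.log N ≤ L := by
    rw [hL, Real.log_div (by linarith) (ne_of_gt hNm), Real.log_pow]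
    have := Real.log_nonneg hrN1
    linarith
  have hσ0 : 0 ≤ σ := by
    rw [hσ]
    have h1 : -(m:ℝ) ≤ L / Real.log N := by
      rw [le_div_iff₀ hlogN]
      linarith
    have hmd' : (m:ℝ) ≤ d := by exact_mod_cast hmd
    have hm1 : (1:ℝ) ≤ m := by exact_mod_cast hm
    linarith
  set K : ℕ := rPatch k m m N * N ^ (2*d - m) with hK
  have hx2pos : (0:ℝ) < (N:ℝ)^2 := by positivity
  have hKσ : ((N:ℝ)^2) ^ σ = (K : ℝ) := by
    have e1 : Real.log ((N:ℝ)^2) * σ = 2*(d:ℝ)*Real.log N + L := by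
      rw [Real.log_pow]
      push_cast
      rw [hσ]
      field_simp
    rw [Real.rpow_def_of_pos hx2pos, e1, Real.exp_add]
    have e2 : Real.exp (2*(d:ℝ)*Real.log N) = (N:ℝ)^(2*d) := by
      rw [show (2*(d:ℝ)*Real.log N) = Real.log ((N:ℝ)^(2*d)) by rw [Real.log_pow]; push_cast; ring]
      exact Real.exp_log (by positivity)
    have e3 : Real.exp L = rN / (N:ℝ)^m := Real.exp_log (by positivity)
    rw [e2, e3, hK]
    push_cast
    rw [pow_sub₀ (N:ℝ) (by positivity) (by omega)]
    field_simp
    ring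
  -- prove membership in the defining set of the Assouad dimension
  have hmem : σ ∈ {σ : ℝ | 0 ≤ σ ∧ ∃ C : ℝ, 0 < C ∧
      ∀ x ∈ F, ∀ r : ℝ, 0 < r → ∀ R : ℝ, r < R →
        (coverNum (Metric.closedBall x R ∩ F) r : ℝ) ≤ C * (R / r) ^ σ} := by
    refine ⟨hσ0, ((N:ℝ)^2 * (2 * Real.sqrt d)) ^ σ,
      Real.rpow_pos_of_pos (by positivity) σ, ?_⟩
    intro x hx r hr R hRr
    have hR : 0 < R := lt_trans hr hRr
    have hex : ∃ p : ℕ, Real.sqrt d * (2 * R / ((N:ℝ)^2)^p) ≤ r := by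
      obtain ⟨n, hn⟩ := pow_unbounded_of_one_lt (Real.sqrt d * (2 * R) / r)
        (show (1:ℝ) < (N:ℝ)^2 by nlinarith)
      refine ⟨n, ?_⟩
      have hXpos : (0:ℝ) < ((N:ℝ)^2)^n := by positivity
      rw [div_lt_iff₀ hr] at hn
      rw [mul_div_assoc', div_le_iff₀ hXpos]
      nlinarith
    set p : ℕ := Nat.find hex with hp
    have hps := Nat.find_spec hex
    have bound1 : coverNum (Metric.closedBall x R ∩ F) r ≤ K ^ p :=
      cover_bound k d m hm hmd hk hε F v b hb hnoAP hNge hN1 x hr hR p hps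
    have bound2 : ((N:ℝ)^2)^p ≤ (N:ℝ)^2 * (Real.sqrt d * (2 * R) / r) := by
      rcases Nat.eq_zero_or_pos p with hp0 | hp0
      · rw [hp0]
        simp only [pow_zero]
        have h2 : (1:ℝ) ≤ Real.sqrt d * (2 * R) / r := by
          rw [le_div_iff₀ hr]
          nlinarith
        nlinarith
      · obtain ⟨q, hq⟩ : ∃ q, p = q + 1 := ⟨p - 1, by omega⟩
        have hqlt : q < Nat.find hex := by rw [← hp]; omega
        have hmin := Nat.find_min hex hqlt
        push_neg at hmin
        have hXq : (0:ℝ) < ((N:ℝ)^2)^q := by positivity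
        have hlt : ((N:ℝ)^2)^q < Real.sqrt d * (2 * R) / r := by
          rw [lt_div_iff₀ hr]
          rw [mul_div_assoc'] at hmin
          have := (lt_div_iff₀ hXq).mp hmin
          nlinarith
        rw [hq]
        calc ((N:ℝ)^2)^(q+1) = (N:ℝ)^2 * ((N:ℝ)^2)^q := by rw [pow_succ]; ring
          _ ≤ (N:ℝ)^2 * (Real.sqrt d * (2 * R) / r) := by nlinarith
    have keyp : ((K:ℝ))^p = (((N:ℝ)^2)^p)^σ := by
      rw [← hKσ, ← Real.rpow_natCast (((N:ℝ)^2)^σ) p, ← Real.rpow_mul (le_of_lt hx2pos),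
        mul_comm, Real.rpow_mul (le_of_lt hx2pos), Real.rpow_natCast]
    have hsplit : (N:ℝ)^2 * (Real.sqrt d * (2 * R) / r) =
        ((N:ℝ)^2 * (2 * Real.sqrt d)) * (R / r) := by
      field_simp
    calc (coverNum (Metric.closedBall x R ∩ F) r : ℝ) ≤ ((K:ℝ))^p := by
          exact_mod_cast Nat.cast_le.mpr bound1
      _ = (((N:ℝ)^2)^p)^σ := keyp
      _ ≤ ((N:ℝ)^2 * (Real.sqrt d * (2 * R) / r))^σ :=
          Real.rpow_le_rpow (by positivity) bound2 hσ0
      _ = (((N:ℝ)^2 * (2 * Real.sqrt d)) * (R / r))^σ := by rw [hsplit]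
      _ = ((N:ℝ)^2 * (2 * Real.sqrt d))^σ * (R / r)^σ :=
          Real.mul_rpow (by positivity) (by positivity)
  exact csInf_le ⟨0, fun τ hτ => hτ.1⟩ hmem
end
end

section
/- Fix k ≥ 3 and ε ∈ (0, 1/16). Let N = ⌈1/(8ε)⌉, η ≥ 6 an integer, and A ⊆ {0,...,N-1} with 0 ∈ A containing no arithmetic progression of length k. Let ψ_a(x) = (η+1)(N-1)x + a, B_0 = {0}, B_n = ∪_{a∈A} ψ_a(B_{n-1}), F = ∪_n B_n. Then limsup_{M→∞} log|F ∩ [1,M]| / log M ≥ log|A| / log((1+η)(N-1)). -/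
open scoped Classical
open Filter

noncomputable section

/-- A set of naturals contains an arithmetic progression of length `k` (gap `Δ > 0`). -/
def HasAPNat (k : ℕ) (A : Set ℕ) : Prop :=
  ∃ a Δ : ℕ, 0 < Δ ∧ ∀ j : Fin k, a + Δ * (j : ℕ) ∈ A

theorem discrete_zeta_lower
    (k : ℕ) (hk : 3 ≤ k) (ε : ℝ) (hε : 0 < ε) (hε' : ε < 1/16)
    (N : ℕ) (hN : N = ⌈1/(8*ε)⌉₊) (η : ℕ) (hη : 6 ≤ η)
    (A : Finset ℕ) (hA : A ⊆ Finset.range N) (h0A : (0 : ℕ) ∈ A)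
    (hAfree : ¬ HasAPNat k (↑A : Set ℕ))
    (ψ : ℕ → ℤ → ℤ) (hψ : ∀ a x, ψ a x = ((η : ℤ) + 1) * ((N : ℤ) - 1) * x + (a : ℤ))
    (B : ℕ → Set ℤ) (hB0 : B 0 = {0})
    (hBs : ∀ n : ℕ, B (n + 1) = ⋃ a ∈ A, ψ a '' B n)
    (F : Set ℤ) (hF : F = ⋃ n : ℕ, B n)
    :
    Real.log (A.card : ℝ) / Real.log (((1 : ℝ) + (η : ℝ)) * ((N : ℝ) - 1)) ≤
      Filter.limsup (fun M : ℕ =>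
        Real.log ((((Finset.Icc (1 : ℤ) (M : ℤ)).filter (fun y : ℤ => y ∈ F)).card : ℝ)) /
          Real.log (M : ℝ)) Filter.atTop := by
  classical
  -- basic numeric facts
  have hN2 : 2 ≤ N := by
    have h8 : (0:ℝ) < 8 * ε := by linarith
    have h1 : (1:ℝ) < 1/(8*ε) := by
      rw [lt_div_iff₀ h8]; linarith
    have : (1:ℕ) < ⌈1/(8*ε)⌉₊ := Nat.lt_ceil.2 (by exact_mod_cast h1)
    omega
  set C : ℕ := (η + 1) * (N - 1) with hC
  have hC2 : 2 ≤ C := by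
    have : 7 * 1 ≤ (η + 1) * (N - 1) := Nat.mul_le_mul (by omega) (by omega)
    omega
  have hNC : N ≤ C := by
    have : 7 * (N - 1) ≤ (η + 1) * (N - 1) := Nat.mul_le_mul_right _ (by omega)
    omega
  have hψC : ∀ (a : ℕ) (x : ℤ), ψ a x = (C : ℤ) * x + a := by
    intro a x
    rw [hψ]
    have : ((C : ℕ) : ℤ) = ((η : ℤ) + 1) * ((N : ℤ) - 1) := by
      rw [hC]
      push_cast [Nat.cast_sub (by omega : 1 ≤ N)]
      ring
    rw [this]
  have hCZ : (0:ℤ) < (C:ℤ) := by exact_mod_cast (by omega : 0 < C)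
  -- the finite levels
  set Bf : ℕ → Finset ℤ :=
    fun n => Nat.rec {0} (fun _ Bp => A.biUnion fun a => Bp.image (ψ a)) n with hBf
  have hBf0 : Bf 0 = {0} := rfl
  have hBfs : ∀ n, Bf (n + 1) = A.biUnion fun a => (Bf n).image (ψ a) := fun n => rfl
  have hψinj : ∀ a : ℕ, Function.Injective (ψ a) := by
    intro a x y hxy
    rw [hψC, hψC] at hxy
    have : (C:ℤ) * x = (C:ℤ) * y := by linarith
    exact mul_left_cancel₀ (by positivity) this
  -- membership in B
  have hBf_sub : ∀ n, (Bf n : Set ℤ) ⊆ B n := by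
    intro n
    induction n with
    | zero => intro x hx; simp [hBf0] at hx; simp [hB0, hx]
    | succ n ih =>
      intro x hx
      rw [hBfs] at hx
      simp only [Finset.coe_biUnion, Set.mem_iUnion, Finset.mem_coe,
        Finset.mem_image] at hx
      obtain ⟨a, ha, y, hy, rfl⟩ := hx
      rw [hBs]
      exact Set.mem_iUnion₂.2 ⟨a, ha, ⟨y, ih hy, rfl⟩⟩
  -- bounds
  have hBf_bd : ∀ n, ∀ x ∈ Bf n, 0 ≤ x ∧ x ≤ (C:ℤ)^n - 1 := by
    intro n
    induction n with
    | zero => intro x hx; simp [hBf0] at hx; simp [hx]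
    | succ n ih =>
      intro x hx
      rw [hBfs, Finset.mem_biUnion] at hx
      obtain ⟨a, ha, hx⟩ := hx
      rw [Finset.mem_image] at hx
      obtain ⟨y, hy, rfl⟩ := hx
      obtain ⟨hy0, hy1⟩ := ih y hy
      have haN : a < N := Finset.mem_range.1 (hA ha)
      have haC : (a:ℤ) < (C:ℤ) := by exact_mod_cast lt_of_lt_of_le haN hNC
      have ha0 : (0:ℤ) ≤ (a:ℤ) := Int.natCast_nonneg a
      rw [hψC]
      constructor
      · positivity
      · have : (C:ℤ) * y ≤ (C:ℤ) * ((C:ℤ)^n - 1) := by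
          exact mul_le_mul_of_nonneg_left hy1 hCZ.le
        have hpow : (C:ℤ) * ((C:ℤ)^n - 1) = (C:ℤ)^(n+1) - (C:ℤ) := by ring
        rw [pow_succ]
        nlinarith
  -- 0 is always there
  have hBf_zero : ∀ n, (0:ℤ) ∈ Bf n := by
    intro n
    induction n with
    | zero => simp [hBf0]
    | succ n ih =>
      rw [hBfs, Finset.mem_biUnion]
      exact ⟨0, h0A, Finset.mem_image.2 ⟨0, ih, by rw [hψC]; simp⟩⟩
  -- cardinality
  have hBf_card : ∀ n, (Bf n).card = A.card ^ n := by
    intro n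
    induction n with
    | zero => simp [hBf0]
    | succ n ih =>
      rw [hBfs]
      rw [Finset.card_biUnion]
      · have : ∀ a ∈ A, ((Bf n).image (ψ a)).card = A.card ^ n := by
          intro a _
          rw [Finset.card_image_of_injective _ (hψinj a), ih]
        rw [Finset.sum_congr rfl this, Finset.sum_const, smul_eq_mul, pow_succ]
        ring
      · intro a ha b hb hab
        rw [Function.onFun, Finset.disjoint_left]
        intro z hza hzb
        obtain ⟨x, hx, hzx⟩ := Finset.mem_image.1 hza
        obtain ⟨y, hy, hzy⟩ := Finset.mem_image.1 hzb
        rw [hψC] at hzx hzy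
        have hdvd : (C:ℤ) ∣ ((b:ℤ) - (a:ℤ)) := ⟨x - y, by linarith [hzx, hzy, mul_sub (C:ℤ) x y]⟩
        have haN : a < N := Finset.mem_range.1 (hA ha)
        have hbN : b < N := Finset.mem_range.1 (hA hb)
        have habs : |(b:ℤ) - (a:ℤ)| < (C:ℤ) := by
          rw [abs_lt]
          constructor
          · have : (a:ℤ) < (C:ℤ) := by exact_mod_cast lt_of_lt_of_le haN hNC
            have := Int.natCast_nonneg b; omega
          · have : (b:ℤ) < (C:ℤ) := by exact_mod_cast lt_of_lt_of_le hbN hNC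
            have := Int.natCast_nonneg a; omega
        have := Int.eq_zero_of_abs_lt_dvd hdvd habs
        exact hab (by exact_mod_cast (by omega : (a:ℤ) = (b:ℤ)))
  -- counting function
  set cnt : ℕ → ℕ := fun M =>
    ((Finset.Icc (1 : ℤ) (M : ℤ)).filter (fun y : ℤ => y ∈ F)).card with hcnt
  have hcnt_le : ∀ M, cnt M ≤ M := by
    intro M
    calc cnt M ≤ (Finset.Icc (1 : ℤ) (M : ℤ)).card := Finset.card_filter_le _ _
    _ = M := by rw [Int.card_Icc]; simp
  have hcnt_ge : ∀ n, A.card ^ n - 1 ≤ cnt (C ^ n) := by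
    intro n
    have hsub : (Bf n).erase 0 ⊆
        (Finset.Icc (1 : ℤ) ((C ^ n : ℕ) : ℤ)).filter (fun y : ℤ => y ∈ F) := by
      intro x hx
      obtain ⟨hx0, hxB⟩ := Finset.mem_erase.1 hx
      obtain ⟨h0, h1⟩ := hBf_bd n x hxB
      rw [Finset.mem_filter, Finset.mem_Icc]
      refine ⟨⟨by omega, ?_⟩, ?_⟩
      · push_cast; omega
      · rw [hF]
        exact Set.mem_iUnion.2 ⟨n, hBf_sub n hxB⟩
    calc A.card ^ n - 1 = ((Bf n).erase 0).card := by
          rw [Finset.card_erase_of_mem (hBf_zero n), hBf_card]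
    _ ≤ cnt (C ^ n) := Finset.card_le_card hsub
  -- the function and its basic bounds
  set f : ℕ → ℝ := fun M => Real.log (cnt M : ℝ) / Real.log (M : ℝ) with hf
  have hf_nonneg : ∀ M, 0 ≤ f M := fun M =>
    div_nonneg (Real.log_natCast_nonneg _) (Real.log_natCast_nonneg _)
  have hf_le_one : ∀ M, f M ≤ 1 := by
    intro M
    rcases le_or_gt M 1 with hM | hM
    · interval_cases M
      · simp [hf]
      · simp [hf]
    · have hlogM : 0 < Real.log (M : ℝ) := Real.log_pos (by exact_mod_cast hM)
      rw [hf, div_le_one hlogM]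
      rcases Nat.eq_zero_or_pos (cnt M) with h | h
      · rw [h]; simpa using hlogM.le
      · exact Real.log_le_log (by exact_mod_cast h) (by exact_mod_cast hcnt_le M)
  -- log C facts
  have hlogC : 0 < Real.log (C : ℝ) := Real.log_pos (by exact_mod_cast hC2)
  set L : ℝ := Real.log (A.card : ℝ) / Real.log (C : ℝ) with hL
  have hL_nonneg : 0 ≤ L := div_nonneg (Real.log_natCast_nonneg _) hlogC.le
  have hcard1 : 1 ≤ A.card := Finset.card_pos.2 ⟨0, h0A⟩
  -- main pointwise estimate
  have hmain : ∀ m : ℕ, L * m / (m + 1) ≤ f (C ^ (m + 1)) := by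
    intro m
    rcases eq_or_lt_of_le hcard1 with h1 | h2
    · have : L = 0 := by rw [hL, ← h1]; simp
      rw [this]
      simpa using hf_nonneg (C ^ (m + 1))
    · -- 2 ≤ A.card
      have hpow_le : A.card ^ m ≤ cnt (C ^ (m + 1)) := by
        have h2' : 2 ≤ A.card := h2
        have : A.card ^ m + A.card ^ m ≤ A.card ^ (m + 1) := by
          calc A.card ^ m + A.card ^ m = A.card ^ m * 2 := by ring
          _ ≤ A.card ^ m * A.card := Nat.mul_le_mul_left _ h2'
          _ = A.card ^ (m + 1) := by rw [pow_succ]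
        have hp : 1 ≤ A.card ^ m := Nat.one_le_pow _ _ (by omega)
        have := hcnt_ge (m + 1)
        omega
      have hp_pos : (0:ℝ) < (A.card : ℝ) ^ m := by positivity
      have hlog_num : (m : ℝ) * Real.log (A.card : ℝ) ≤ Real.log (cnt (C ^ (m + 1)) : ℝ) := by
        calc (m : ℝ) * Real.log (A.card : ℝ) = Real.log ((A.card : ℝ) ^ m) := by
              rw [Real.log_pow]
        _ ≤ Real.log (cnt (C ^ (m + 1)) : ℝ) := by
              apply Real.log_le_log hp_pos
              exact_mod_cast hpow_le
      have hden : Real.log ((C ^ (m + 1) : ℕ) : ℝ) = (m + 1 : ℝ) * Real.log (C : ℝ) := by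
        push_cast
        rw [Real.log_pow]
        push_cast; ring
      rw [hf]
      simp only []
      rw [hden]
      have hden_pos : (0:ℝ) < (m + 1 : ℝ) * Real.log (C : ℝ) := by positivity
      have heq : L * m / (m + 1) = ((m : ℝ) * Real.log (A.card : ℝ)) / ((m + 1 : ℝ) * Real.log (C : ℝ)) := by
        rw [hL]; field_simp
      rw [heq]
      gcongr
  -- conclude via frequently
  have hLcast : Real.log (A.card : ℝ) / Real.log (((1 : ℝ) + (η : ℝ)) * ((N : ℝ) - 1)) = L := by
    rw [hL]
    congr 2
    rw [hC]
    push_cast [Nat.cast_sub (by omega : 1 ≤ N)]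
    ring
  rw [hLcast]
  have hbdd : Filter.IsBoundedUnder (· ≤ ·) Filter.atTop f :=
    Filter.isBoundedUnder_of ⟨1, fun M => hf_le_one M⟩
  apply le_of_forall_sub_le
  intro δ hδ
  obtain ⟨m0, hm0⟩ := exists_nat_gt (L / δ)
  have hfreq : ∃ᶠ M in Filter.atTop, L - δ ≤ f M := by
    rw [Filter.frequently_atTop]
    intro M0
    set m := max m0 M0 with hm
    refine ⟨C ^ (m + 1), ?_, ?_⟩
    · refine le_of_lt ?_
      calc M0 ≤ m := le_max_right _ _
      _ < 2 ^ m := Nat.lt_two_pow_self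
      _ ≤ 2 ^ (m + 1) := Nat.pow_le_pow_right (by omega) (by omega)
      _ ≤ C ^ (m + 1) := Nat.pow_le_pow_left hC2 _
    · refine le_trans ?_ (hmain m)
      have hm1 : (0:ℝ) < (m:ℝ) + 1 := by positivity
      have hLδ : L / ((m:ℝ) + 1) ≤ δ := by
        rw [div_le_iff₀ hm1]
        have hm0m : (m0:ℝ) ≤ (m:ℝ) := by exact_mod_cast le_max_left m0 M0
        have : L / δ < (m:ℝ) + 1 := by linarith
        rw [div_lt_iff₀ hδ] at this
        nlinarith
      have heq2 : L * (m:ℝ) / ((m:ℝ) + 1) = L - L / ((m:ℝ) + 1) := by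
        field_simp
        ring
      rw [heq2]
      linarith
  have := Filter.le_limsup_of_frequently_le hfreq hbdd
  exact this
end
end

section
/- Fix k ≥ 3 and ε ∈ (0, 1/16). Let N = ⌈1/(8ε)⌉, η ≥ 6 an integer, and A ⊆ {0,...,N-1} with 0 ∈ A containing no arithmetic progression of length k. Let ψ_a(x) = (η+1)(N-1)x + a, B_0 = {0}, B_n = ∪_{a∈A} ψ_a(B_{n-1}), F = ∪_n B_n. Then F contains no (k, ε, {1})-AP: there do not exist Δ > 0 and t ∈ ℝ such that for every j ∈ {0,...,k-1} there is y ∈ F with |t + jΔ − y| ≤ εΔ. -/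
open scoped Classical
open Filter

noncomputable section

set_option maxHeartbeats 1000000 in
theorem discrete_no_approx_AP
    (k : ℕ) (hk : 3 ≤ k) (ε : ℝ) (hε : 0 < ε) (hε' : ε < 1/16)
    (N : ℕ) (hN : N = ⌈1/(8*ε)⌉₊) (η : ℕ) (hη : 6 ≤ η)
    (A : Finset ℕ) (hA : A ⊆ Finset.range N) (h0A : (0 : ℕ) ∈ A)
    (hAfree : ¬ HasAPNat k (↑A : Set ℕ))
    (ψ : ℕ → ℤ → ℤ) (hψ : ∀ a x, ψ a x = ((η : ℤ) + 1) * ((N : ℤ) - 1) * x + (a : ℤ))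
    (B : ℕ → Set ℤ) (hB0 : B 0 = {0})
    (hBs : ∀ n : ℕ, B (n + 1) = ⋃ a ∈ A, ψ a '' B n)
    (F : Set ℤ) (hF : F = ⋃ n : ℕ, B n)
    :
    ¬ ∃ t Δ : ℝ, 0 < Δ ∧ ∀ j : Fin k, ∃ y ∈ F, |t + (j : ℕ) * Δ - (y : ℝ)| ≤ ε * Δ := by
  rintro ⟨t, Δ, hΔ, hAP⟩
  set M : ℤ := ((η : ℤ) + 1) * ((N : ℤ) - 1) with hMdef
  -- numeric facts
  have hε8 : (0:ℝ) < 8 * ε := by positivity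
  have hN3 : 3 ≤ N := by
    rw [hN]
    refine Nat.lt_ceil.mpr ?_
    push_cast
    rw [lt_div_iff₀ hε8]
    nlinarith
  have hN3R : (3:ℝ) ≤ (N:ℝ) := by exact_mod_cast hN3
  have hNlb : 1/(8*ε) ≤ (N:ℝ) := by rw [hN]; exact Nat.le_ceil _
  have hεN : (1:ℝ)/8 ≤ ε * (N:ℝ) := by
    have h := mul_le_mul_of_nonneg_left hNlb hε.le
    calc (1:ℝ)/8 = ε * (1/(8*ε)) := by field_simp
    _ ≤ ε * N := h
  have hNub : ε * ((N:ℝ) - 1) < 1/8 := by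
    have h1 : (N:ℝ) < 1/(8*ε) + 1 := by
      rw [hN]; exact Nat.ceil_lt_add_one (by positivity)
    have h2 : (N:ℝ) - 1 < 1/(8*ε) := by linarith
    have h3 : ε * ((N:ℝ)-1) < ε * (1/(8*ε)) := mul_lt_mul_of_pos_left h2 hε
    calc ε * ((N:ℝ)-1) < ε * (1/(8*ε)) := h3
    _ = 1/8 := by field_simp
  have hN3' : (3:ℤ) ≤ (N:ℤ) := by exact_mod_cast hN3
  have hη' : (6:ℤ) ≤ (η:ℤ) := by exact_mod_cast hη
  have h6η : (6:ℝ) ≤ (η:ℝ) := by exact_mod_cast hη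
  have hη0R : (0:ℝ) < (η:ℝ) := by linarith
  have hM14 : (14:ℤ) ≤ M := by nlinarith
  have hMN : (N:ℤ) < M := by nlinarith
  have hMcast : ((M:ℤ):ℝ) = ((η:ℝ)+1)*((N:ℝ)-1) := by rw [hMdef]; push_cast; ring
  have haN : ∀ b ∈ A, (b:ℤ) ≤ (N:ℤ) - 1 := by
    intro b hb
    have := Finset.mem_range.mp (hA hb)
    omega
  -- structure of F
  have hmemF : ∀ x : ℤ, x ∈ F ↔ ∃ n, x ∈ B n := by
    intro x; rw [hF]; exact Set.mem_iUnion
  have hF0 : (0:ℤ) ∈ F := (hmemF 0).mpr ⟨0, by rw [hB0]; rfl⟩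
  have hFstep : ∀ x ∈ F, ∃ z ∈ F, ∃ b ∈ A, x = M * z + (b:ℤ) := by
    intro x hx
    obtain ⟨n, hn⟩ := (hmemF x).mp hx
    cases n with
    | zero =>
      rw [hB0] at hn
      simp only [Set.mem_singleton_iff] at hn
      exact ⟨0, hF0, 0, h0A, by simp [hn]⟩
    | succ n =>
      rw [hBs] at hn
      simp only [Set.mem_iUnion, Set.mem_image] at hn
      obtain ⟨b, hb, z, hz, hzx⟩ := hn
      refine ⟨z, (hmemF z).mpr ⟨n, hz⟩, b, hb, ?_⟩
      rw [← hzx, hψ]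
  have hFmod : ∀ x ∈ F, ∃ b : ℕ, b ∈ A ∧ x % M = (b:ℤ) := by
    intro x hx
    obtain ⟨z, hz, b, hb, rfl⟩ := hFstep x hx
    refine ⟨b, hb, ?_⟩
    have hbN := haN b hb
    rw [add_comm, Int.add_mul_emod_self_left]
    exact Int.emod_eq_of_lt (by positivity) (by omega)
  have hdecomp : ∀ mm : ℕ, ∀ x ∈ F,
      ∃ Z rr : ℤ, Z ∈ F ∧ 0 ≤ rr ∧ (η:ℤ) * rr ≤ M^mm - 1 ∧ x = Z * M^mm + rr := by
    intro mm
    induction mm with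
    | zero => intro x hx; exact ⟨x, 0, hx, le_refl 0, by simp, by ring⟩
    | succ mm ih =>
      intro x hx
      obtain ⟨z, hz, b, hb, rfl⟩ := hFstep x hx
      obtain ⟨Z, rr, hZ, hrr0, hrrb, hzd⟩ := ih z hz
      have hb0 : (0:ℤ) ≤ (b:ℤ) := Int.ofNat_nonneg b
      refine ⟨Z, M * rr + b, hZ, ?_, ?_, ?_⟩
      · have : (0:ℤ) ≤ M * rr := mul_nonneg (by linarith) hrr0
        linarith
      · have h1 : (η:ℤ) * (M * rr) ≤ M * (M^mm - 1) := by
          calc (η:ℤ)*(M*rr) = M * ((η:ℤ)*rr) := by ring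
          _ ≤ M * (M^mm - 1) := mul_le_mul_of_nonneg_left hrrb (by linarith)
        have hMeq : M = (η:ℤ)*((N:ℤ)-1) + ((N:ℤ)-1) := by rw [hMdef]; ring
        have h2 : (η:ℤ) * (b:ℤ) ≤ M - 2 := by
          have hbb := haN b hb
          have h3 : (η:ℤ) * (b:ℤ) ≤ (η:ℤ) * ((N:ℤ)-1) :=
            mul_le_mul_of_nonneg_left hbb (by linarith)
          linarith
        calc (η:ℤ) * (M*rr + (b:ℤ)) = (η:ℤ)*(M*rr) + (η:ℤ)*(b:ℤ) := by ring
        _ ≤ M * (M^mm - 1) + (M - 2) := add_le_add h1 h2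
        _ = M^(mm+1) - 2 := by rw [pow_succ]; ring
        _ ≤ M^(mm+1) - 1 := by linarith
      · rw [hzd, pow_succ]; ring
  -- choose approximating points
  choose y hyF hye using hAP
  have hM1R : (1:ℝ) < ((M:ℤ):ℝ) := by exact_mod_cast (show (1:ℤ) < M by linarith)
  have hex : ∃ mm : ℕ, 8*ε*Δ ≤ ((M:ℤ):ℝ)^mm := by
    obtain ⟨n, hn⟩ := pow_unbounded_of_one_lt (8*ε*Δ) hM1R
    exact ⟨n, hn.le⟩
  set m := Nat.find hex with hm
  have hP8 : 8*ε*Δ ≤ ((M:ℤ):ℝ)^m := Nat.find_spec hex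
  have hPmin : ∀ i, i < m → ((M:ℤ):ℝ)^i < 8*ε*Δ := fun i hi => not_le.mp (Nat.find_min hex hi)
  set P : ℝ := ((M:ℤ):ℝ)^m with hPdef
  have hP0 : (0:ℝ) < P := by positivity
  have hP1 : (1:ℝ) ≤ P := by
    calc (1:ℝ) = 1^m := (one_pow m).symm
    _ ≤ ((M:ℤ):ℝ)^m := pow_le_pow_left₀ zero_le_one hM1R.le m
  have hPcast : ((M^m : ℤ):ℝ) = P := by push_cast [hPdef]; ring
  -- decompose the points at scale m
  have hdec := fun j : Fin k => hdecomp m (y j) (hyF j)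
  choose Y r hYF hr0 hrb hyd using hdec
  set Y' : ℕ → ℤ := fun i => if h : i < k then Y ⟨i, h⟩ else 0 with hY'def
  set r' : ℕ → ℤ := fun i => if h : i < k then r ⟨i, h⟩ else 0 with hr'def
  have hprop : ∀ i, i < k → Y' i ∈ F ∧ (0:ℝ) ≤ ((r' i : ℤ):ℝ) ∧
      (η:ℝ) * ((r' i:ℤ):ℝ) ≤ P - 1 ∧
      |t + (i:ℝ)*Δ - (((Y' i:ℤ):ℝ) * P + ((r' i:ℤ):ℝ))| ≤ ε*Δ := by
    intro i h
    have e1 : Y' i = Y ⟨i, h⟩ := by rw [hY'def]; simp [h]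
    have e2 : r' i = r ⟨i, h⟩ := by rw [hr'def]; simp [h]
    refine ⟨e1 ▸ hYF ⟨i,h⟩, ?_, ?_, ?_⟩
    · rw [e2]; exact_mod_cast hr0 ⟨i,h⟩
    · rw [e2]
      have h3 : (((η:ℤ) * r ⟨i,h⟩ : ℤ):ℝ) ≤ ((M^m - 1 : ℤ):ℝ) := by
        exact_mod_cast hrb ⟨i,h⟩
      push_cast at h3
      rw [← hPdef] at h3
      linarith
    · have h4 := hye ⟨i,h⟩
      have h5 : ((y ⟨i,h⟩ : ℤ):ℝ) = ((Y' i:ℤ):ℝ) * P + ((r' i:ℤ):ℝ) := by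
        rw [e1, e2, hyd ⟨i,h⟩]
        push_cast
        rw [← hPdef]
      rw [h5] at h4
      simpa using h4

  have hYF' : ∀ i, i < k → Y' i ∈ F := fun i h => (hprop i h).1
  have hr0' : ∀ i, i < k → (0:ℝ) ≤ ((r' i:ℤ):ℝ) := fun i h => (hprop i h).2.1
  have hrb' : ∀ i, i < k → (η:ℝ) * ((r' i:ℤ):ℝ) ≤ P - 1 := fun i h => (hprop i h).2.2.1
  have hu : ∀ i, i < k → |t + (i:ℝ)*Δ - (((Y' i:ℤ):ℝ) * P + ((r' i:ℤ):ℝ))| ≤ ε*Δ :=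
    fun i h => (hprop i h).2.2.2
  have hrup : ∀ i, i < k → ((r' i:ℤ):ℝ) ≤ (P-1)/(η:ℝ) := by
    intro i h
    rw [le_div_iff₀ hη0R]
    have := hrb' i h
    linarith
  -- pair bounds
  have hpair : ∀ i g : ℕ, i + g < k →
      |((Y' (i+g) - Y' i : ℤ):ℝ) * P - (g:ℝ)*Δ| ≤ 2*(ε*Δ) + (P-1)/(η:ℝ) := by
    intro i g h
    have hi : i < k := by omega
    have h1 := hu i hi
    have h2 := hu (i+g) h
    have hq1 := hrup i hi
    have hq2 := hrup (i+g) h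
    have hr1 := hr0' i hi
    have hr2 := hr0' (i+g) h
    rw [abs_le] at h1 h2 ⊢
    push_cast at h1 h2 ⊢
    constructor <;> linarith
  set D : ℤ := Y' 1 - Y' 0 with hDdef
  have hd6gen : (P-1)/(η:ℝ) ≤ (P-1)/6 :=
    div_le_div_of_nonneg_left (by linarith) (by norm_num) h6η
  have hεΔ0 : (0:ℝ) < ε*Δ := mul_pos hε hΔ
  -- all consecutive differences are equal to D
  have hDeq : ∀ i, i + 1 < k → Y' (i+1) - Y' i = D := by
    intro i hik
    have h1 := hpair i 1 hik
    have h0 := hpair 0 1 (by omega)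
    rw [abs_le] at h0 h1
    push_cast at h0 h1
    set z : ℤ := Y' (i+1) - Y' i - (Y' (0+1) - Y' 0) with hzdef
    have hc : 2*(2*(ε*Δ) + (P-1)/(η:ℝ)) < P := by linarith
    have hc1 : ((z:ℤ):ℝ) * P < 1 * P := by
      push_cast [hzdef]
      linarith [h0.1, h1.2]
    have hc2 : (-1 : ℝ) * P < ((z:ℤ):ℝ) * P := by
      push_cast [hzdef]
      linarith [h0.2, h1.1]
    have l1 : ((z:ℤ):ℝ) < 1 := lt_of_mul_lt_mul_right hc1 hP0.le
    have l2 : (-1:ℝ) < ((z:ℤ):ℝ) := lt_of_mul_lt_mul_right hc2 hP0.le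
    have hzb : (-1:ℤ) < z ∧ z < 1 := ⟨by exact_mod_cast l2, by exact_mod_cast l1⟩
    have h01 : Y' (0+1) = Y' 1 := rfl
    omega
  have hY1 : Y' 1 - Y' 0 = D := hDdef.symm
  have hY2 : Y' 2 - Y' 0 = 2*D := by
    have h2 := hDeq 1 (by omega)
    have h1 := hDeq 0 (by omega)
    have e1 : Y' (1+1) = Y' 2 := rfl
    have e0 : Y' (0+1) = Y' 1 := rfl
    omega
  -- D ≥ 1
  have hD1 : 1 ≤ D := by
    by_contra hcon
    push_neg at hcon
    have hD0 : D ≤ 0 := by omega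
    have h02 := hpair 0 2 (by omega)
    have e2 : Y' (0+2) = Y' 2 := rfl
    rw [e2, hY2] at h02
    rw [abs_le] at h02
    push_cast at h02
    have hDR0 : ((D:ℤ):ℝ) ≤ 0 := by exact_mod_cast hD0
    have h2DP : 2*((D:ℤ):ℝ)*P ≤ 0 :=
      mul_nonpos_of_nonpos_of_nonneg (by linarith) hP0.le
    have hkey : 2*Δ - 2*(ε*Δ) ≤ (P-1)/(η:ℝ) := by linarith [h02.1]
    rcases Nat.eq_zero_or_pos m with hm0 | hmpos
    · have hp1 : P = 1 := by rw [hPdef, hm0, pow_zero]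
      rw [hp1] at hkey
      norm_num at hkey
      nlinarith [mul_lt_mul_of_pos_right hε' hΔ]
    · obtain ⟨m', hm'⟩ : ∃ m', m = m' + 1 := ⟨m-1, by omega⟩
      have hPm : P < 8*ε*Δ * ((M:ℤ):ℝ) := by
        rw [hPdef, hm', pow_succ]
        exact mul_lt_mul_of_pos_right (hPmin m' (by omega)) (by linarith)
      have h8pos : (0:ℝ) ≤ 8*Δ*((η:ℝ)+1) := by
        apply mul_nonneg (by linarith) (by positivity)
      have h8 : 8*ε*Δ*((M:ℤ):ℝ) ≤ Δ*((η:ℝ)+1) := by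
        rw [hMcast]
        nlinarith [mul_le_mul_of_nonneg_left hNub.le h8pos]
      have hkey2 : (2*Δ - 2*(ε*Δ)) * (η:ℝ) ≤ P - 1 := (le_div_iff₀ hη0R).mp hkey
      nlinarith [hkey2, hPm, h8, hΔ,
        mul_le_mul_of_nonneg_right hε'.le (by positivity : (0:ℝ) ≤ Δ*(η:ℝ)),
        mul_le_mul_of_nonneg_left h6η hΔ.le]
  -- D ≤ M - N
  have hDle : D ≤ M - (N:ℤ) := by
    have h01 := hpair 0 1 (by omega)
    have e0 : Y' (0+1) = Y' 1 := rfl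
    rw [e0, ← hDdef] at h01
    rw [abs_le] at h01
    push_cast at h01
    have hup : ((D:ℤ):ℝ) * P ≤ Δ + 2*(ε*Δ) + (P-1)/6 := by linarith [h01.2, hd6gen]
    have hNM : 6*(N:ℝ) - 7 ≤ ((M:ℤ):ℝ) - (N:ℝ) := by
      rw [hMcast]
      nlinarith [mul_le_mul_of_nonneg_right (show (7:ℝ) ≤ (η:ℝ)+1 by linarith)
        (show (0:ℝ) ≤ (N:ℝ)-1 by linarith)]
    have t1 : 8*ε*(((D:ℤ):ℝ)*P) ≤ 8*ε*(Δ + 2*(ε*Δ) + (P-1)/6) :=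
      mul_le_mul_of_nonneg_left hup (by positivity)
    have t2 : 8*ε*Δ ≤ P := hP8
    have t3 : 2*ε*(8*ε*Δ) ≤ 2*ε*P := mul_le_mul_of_nonneg_left t2 (by positivity)
    have t5 : ε*P ≤ P/16 := by nlinarith
    have t6 : (1/8:ℝ)*P ≤ ε*(N:ℝ)*P := mul_le_mul_of_nonneg_right hεN hP0.le
    have t8 : 8*ε*((6*(N:ℝ)-7)*P) ≤ 8*ε*((((M:ℤ):ℝ)-(N:ℝ))*P) :=
      mul_le_mul_of_nonneg_left (mul_le_mul_of_nonneg_right hNM hP0.le) (by positivity)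
    have tmain : 8*ε*(((D:ℤ):ℝ)*P) ≤ 8*ε*(((((M:ℤ):ℝ))-(N:ℝ))*P) := by
      have expand : 8*ε*((6*(N:ℝ)-7)*P) = 48*(ε*(N:ℝ)*P) - 56*(ε*P) := by ring
      nlinarith [t1, t3, t5, t6, t8, hP0, hεΔ0]
    have hDR : ((D:ℤ):ℝ) ≤ (((M:ℤ):ℝ)) - (N:ℝ) := by
      have h1 : ((D:ℤ):ℝ)*P ≤ ((((M:ℤ):ℝ))-(N:ℝ))*P :=
        le_of_mul_le_mul_left tmain (by positivity)
      exact le_of_mul_le_mul_right h1 hP0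
    exact_mod_cast (by push_cast; linarith : ((D:ℤ):ℝ) ≤ ((M - (N:ℤ) : ℤ):ℝ))
  -- last digits form a genuine AP in A
  have hdig : ∀ i : ℕ, ∃ b : ℕ, i < k → (b ∈ A ∧ Y' i % M = (b:ℤ)) := by
    intro i
    by_cases h : i < k
    · obtain ⟨b, hb1, hb2⟩ := hFmod (Y' i) (hYF' i h)
      exact ⟨b, fun _ => ⟨hb1, hb2⟩⟩
    · exact ⟨0, fun h' => absurd h' h⟩
  choose a ha using hdig
  have hstepa : ∀ i, i + 1 < k → (a (i+1) : ℤ) = (a i : ℤ) + D := by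
    intro i h
    have hi : i < k := by omega
    obtain ⟨ha1, ha2⟩ := ha i hi
    obtain ⟨hb1, hb2⟩ := ha (i+1) h
    have hd1 : M ∣ (Y' i - (a i:ℤ)) := Int.dvd_self_sub_of_emod_eq ha2
    have hd2 : M ∣ (Y' (i+1) - (a (i+1):ℤ)) := Int.dvd_self_sub_of_emod_eq hb2
    have hYd := hDeq i h
    have hdd : M ∣ (D - ((a (i+1):ℤ) - (a i:ℤ))) := by
      have heq : D - ((a (i+1):ℤ) - (a i:ℤ)) =
          (Y' (i+1) - (a (i+1):ℤ)) - (Y' i - (a i:ℤ)) := by omega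
      rw [heq]
      exact dvd_sub hd2 hd1
    have hai : (a i:ℤ) ≤ (N:ℤ) - 1 := haN _ ha1
    have hai2 : (a (i+1):ℤ) ≤ (N:ℤ) - 1 := haN _ hb1
    have h0i : (0:ℤ) ≤ (a i:ℤ) := Int.ofNat_nonneg _
    have h0i2 : (0:ℤ) ≤ (a (i+1):ℤ) := Int.ofNat_nonneg _
    have hw0 : D - ((a (i+1):ℤ) - (a i:ℤ)) = 0 := by
      rcases hdd with ⟨c, hc⟩
      rcases lt_trichotomy c 0 with hcc | hcc | hcc
      · have h1 : M * c ≤ M * (-1) := mul_le_mul_of_nonneg_left (by omega) (by omega)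
        have hw : D - ((a (i+1):ℤ) - (a i:ℤ)) ≤ -M := by
          rw [hc]; linarith [h1]
        exfalso; linarith [hw, hD1, hai2, h0i, hMN]
      · rw [hcc, mul_zero] at hc; omega
      · have h1 : M * 1 ≤ M * c := mul_le_mul_of_nonneg_left (by omega) (by omega)
        have hw : M ≤ D - ((a (i+1):ℤ) - (a i:ℤ)) := by
          rw [hc]; linarith [h1]
        exfalso; linarith [hw, hDle, hai, h0i2, hMN]
    omega
  have hDnat : (D.toNat : ℤ) = D := Int.toNat_of_nonneg (by omega)
  have hlin : ∀ i, i < k → (a i : ℤ) = (a 0 : ℤ) + D * (i:ℤ) := by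
    intro i
    induction i with
    | zero => intro _; simp
    | succ i ih =>
      intro h
      have h1 : i < k := by omega
      rw [hstepa i h, ih h1]
      push_cast
      ring
  apply hAfree
  refine ⟨a 0, D.toNat, by omega, ?_⟩
  intro j
  have hj : (j:ℕ) < k := j.isLt
  have h1 := hlin (j:ℕ) hj
  have h2 : ((a (j:ℕ) : ℕ) : ℤ) = ((a 0 + D.toNat * (j:ℕ) : ℕ) : ℤ) := by
    push_cast
    rw [hDnat]
    exact h1
  have h3 : a (j:ℕ) = a 0 + D.toNat * (j:ℕ) := by exact_mod_cast h2
  rw [← h3]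
  exact Finset.mem_coe.mpr (ha (j:ℕ) hj).1
end
end
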